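/- arXiv:2001.07468 — 5 statements merged into one kernel-verified Lean document; each statement's English description precedes it below -/
import Mathlib

section
/- Let u = (u_i)_{i≥0} be the sequence with values in ℤ/4ℤ where u_i is the coefficient of x^i in 2x + (3x + 2x³)·φ(x) reduced modulo 4, i.e., u_i ≡ 3C_{i-1} + 2C_{i-3} + 2·[i = 1] (mod 4) with the convention C_j = 0 for j < 0. Then the 2-kernel of u is finite, i.e., u is 2-automatic. (This is the automaticity part of Theorem 1.1: Stiel_p modulo 4 is 2-automatic.) -/
/-- The `k`-kernel of a sequence `u`. -/
def kKernel {α : Type*} (k : ℕ) (u : ℕ → α) : Set (ℕ → α) :=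
  {g | ∃ e j : ℕ, j < k ^ e ∧ g = fun n => u (k ^ e * n + j)}

/-- The sequence of coefficients (mod 4) of `2x + (3x + 2x³)·φ(x)`, where `φ` is the
generating function of the Catalan numbers: `u i = 3 C_{i-1} + 2 C_{i-3} + 2·[i = 1]`,
with the convention `C_j = 0` for `j < 0`. -/
def u (i : ℕ) : ZMod 4 :=
  3 * (if 1 ≤ i then (catalan (i - 1) : ZMod 4) else 0) +
    2 * (if 3 ≤ i then (catalan (i - 3) : ZMod 4) else 0) +
    (if i = 1 then 2 else 0)

open Finset
open scoped Classical

def P1 (m : ℕ) : Prop := ∃ c, m = 2 ^ c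
def P2 (m : ℕ) : Prop := ∃ c d, d < c ∧ m = 2 ^ c + 2 ^ d

noncomputable def g (m : ℕ) : ZMod 4 := if P1 m then 1 else if P2 m then 2 else 0

lemma pow_pos2 (c : ℕ) : 0 < 2 ^ c := Nat.pow_pos (n := c) (by norm_num)

lemma P1_one : P1 1 := ⟨0, rfl⟩
lemma P1_two : P1 2 := ⟨1, rfl⟩
lemma not_P1_zero : ¬ P1 0 := by rintro ⟨c, hc⟩; have := pow_pos2 c; omega
lemma not_P2_zero : ¬ P2 0 := by rintro ⟨c, d, _, hc⟩; have := pow_pos2 c; have := pow_pos2 d; omega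
lemma g_zero : g 0 = 0 := by simp [g, not_P1_zero, not_P2_zero]

lemma min_eq {e f c d : ℕ} (hef : e < f) (hdc : d < c) (h : 2^e + 2^f = 2^d + 2^c) : e = d := by
  rcases le_total e d with hle | hle
  · by_contra hne
    have hed : e < d := lt_of_le_of_ne hle hne
    have h1 : 2^e * (1 + 2^(f-e)) = 2^e * (2^(d-e) + 2^(c-e)) := by
      rw [Nat.mul_add, Nat.mul_add, mul_one, ← pow_add, ← pow_add, ← pow_add]
      rw [Nat.add_sub_cancel' hef.le, Nat.add_sub_cancel' hle, Nat.add_sub_cancel' (hed.trans hdc).le]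
      omega
    have h2 : 1 + 2^(f-e) = 2^(d-e) + 2^(c-e) := Nat.eq_of_mul_eq_mul_left (pow_pos2 e) h1
    have : 2 ∣ 2^(f-e) := dvd_pow_self 2 (by omega)
    have : 2 ∣ 2^(d-e) := dvd_pow_self 2 (by omega)
    have : 2 ∣ 2^(c-e) := dvd_pow_self 2 (by omega)
    omega
  · by_contra hne
    have hed : d < e := lt_of_le_of_ne hle (Ne.symm hne)
    have h1 : 2^d * (2^(e-d) + 2^(f-d)) = 2^d * (1 + 2^(c-d)) := by
      rw [Nat.mul_add, Nat.mul_add, mul_one, ← pow_add, ← pow_add, ← pow_add]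
      rw [Nat.add_sub_cancel' hed.le, Nat.add_sub_cancel' (hed.trans hef).le, Nat.add_sub_cancel' hdc.le]
      omega
    have h2 : 2^(e-d) + 2^(f-d) = 1 + 2^(c-d) := Nat.eq_of_mul_eq_mul_left (pow_pos2 d) h1
    have : 2 ∣ 2^(e-d) := dvd_pow_self 2 (by omega)
    have : 2 ∣ 2^(f-d) := dvd_pow_self 2 (by omega)
    have : 2 ∣ 2^(c-d) := dvd_pow_self 2 (by omega)
    omega

-- 2^e + 2^f = 2^c implies e = f (and c = e+1)
lemma pow_add_pow_eq_pow {e f c : ℕ} (h : 2^e + 2^f = 2^c) : e = f := by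
  rcases lt_trichotomy e f with hef | hef | hef
  · exfalso
    have hec : e < c := by
      have : 2^e < 2^c := by have := pow_pos2 f; omega
      exact (Nat.pow_lt_pow_iff_right (by norm_num)).mp this
    have h1 : 2^e * (1 + 2^(f-e)) = 2^e * 2^(c-e) := by
      rw [Nat.mul_add, mul_one, ← pow_add, ← pow_add]
      rw [Nat.add_sub_cancel' hef.le, Nat.add_sub_cancel' hec.le]
      exact h
    have h2 : 1 + 2^(f-e) = 2^(c-e) := Nat.eq_of_mul_eq_mul_left (pow_pos2 e) h1
    have : 2 ∣ 2^(f-e) := dvd_pow_self 2 (by omega)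
    have : 2 ∣ 2^(c-e) := dvd_pow_self 2 (by omega)
    omega
  · exact hef
  · exfalso
    have hfc : f < c := by
      have : 2^f < 2^c := by have := pow_pos2 e; omega
      exact (Nat.pow_lt_pow_iff_right (by norm_num)).mp this
    have h1 : 2^f * (2^(e-f) + 1) = 2^f * 2^(c-f) := by
      rw [Nat.mul_add, mul_one, ← pow_add, ← pow_add]
      rw [Nat.add_sub_cancel' hef.le, Nat.add_sub_cancel' hfc.le]
      omega
    have h2 : 2^(e-f) + 1 = 2^(c-f) := Nat.eq_of_mul_eq_mul_left (pow_pos2 f) h1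
    have : 2 ∣ 2^(e-f) := dvd_pow_self 2 (by omega)
    have : 2 ∣ 2^(c-f) := dvd_pow_self 2 (by omega)
    omega

lemma not_P1_and_P2 {m : ℕ} (h1 : P1 m) (h2 : P2 m) : False := by
  obtain ⟨a, rfl⟩ := h1
  obtain ⟨c, d, hdc, h⟩ := h2
  have := pow_add_pow_eq_pow (c := a) (e := c) (f := d) (by omega)
  omega

lemma pow2_mod {c e : ℕ} (h : e ≤ c) : 2^c % 2^e = 0 := by
  obtain ⟨k, hk⟩ := pow_dvd_pow 2 h
  simp [hk, Nat.mul_mod_right]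

lemma mod_self_add {e n j : ℕ} (hje : j < 2^e) : (2^e * n + j) % 2^e = j := by
  rw [Nat.mul_add_mod, Nat.mod_eq_of_lt hje]

lemma P1_of_mul_pow {n c e : ℕ} (h : 2^e * n = 2^c) : P1 n := by
  have : n ∣ 2^c := Dvd.intro_left _ h
  obtain ⟨k, _, rfl⟩ := (Nat.dvd_prime_pow Nat.prime_two).mp this
  exact ⟨k, rfl⟩

lemma K1 {e n j : ℕ} (hn : 1 ≤ n) (hj : 1 ≤ j) (hje : j < 2^e) : ¬ P1 (2^e * n + j) := by
  rintro ⟨c, hc⟩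
  have hle : 2^e ≤ 2^c := by nlinarith [pow_pos2 e, pow_pos2 c]
  have hec : e ≤ c := (Nat.pow_le_pow_iff_right (by norm_num)).mp hle
  have h1 : (2^e * n + j) % 2^e = j := mod_self_add hje
  rw [hc, pow2_mod hec] at h1
  omega

lemma K2 {e n j : ℕ} (hn : 1 ≤ n) (hj : 1 ≤ j) (hje : j < 2^e) :
    P2 (2^e * n + j) ↔ (P1 n ∧ P1 j) := by
  constructor
  · rintro ⟨c, d, hdc, heq⟩
    have hec : e ≤ c := by
      have h2 : 2^d ≤ 2^c := Nat.pow_le_pow_right (by norm_num) hdc.le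
      have : 2^e < 2^(c+1) := by
        rw [pow_succ]
        nlinarith [pow_pos2 e, pow_pos2 d, pow_pos2 c]
      have := (Nat.pow_lt_pow_iff_right (show 1 < 2 by norm_num)).mp this
      omega
    have hde : d < e := by
      by_contra hde
      push_neg at hde
      have h1 : (2^e * n + j) % 2^e = j := mod_self_add hje
      rw [heq, Nat.add_mod, pow2_mod hec, pow2_mod hde] at h1
      simp at h1
      omega
    have hjd : j = 2^d := by
      have h1 : (2^e * n + j) % 2^e = j := mod_self_add hje
      have hdlt : 2^d < 2^e := Nat.pow_lt_pow_right (by norm_num) hde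
      rw [heq, Nat.add_mod, pow2_mod hec] at h1
      simp [Nat.mod_eq_of_lt hdlt] at h1
      omega
    have hmul : 2^e * n = 2^c := by omega
    exact ⟨P1_of_mul_pow hmul, ⟨d, hjd⟩⟩
  · rintro ⟨⟨k, rfl⟩, ⟨b, rfl⟩⟩
    have hbe : b < e := (Nat.pow_lt_pow_iff_right (show 1 < 2 by norm_num)).mp hje
    exact ⟨e + k, b, by omega, by rw [← pow_add]⟩

lemma P1_scale {e n : ℕ} (hn : 1 ≤ n) : P1 (2^e * n) ↔ P1 n := by
  constructor
  · rintro ⟨c, hc⟩; exact P1_of_mul_pow hc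
  · rintro ⟨k, rfl⟩; exact ⟨e + k, by rw [← pow_add]⟩

lemma P2_scale {e n : ℕ} (hn : 1 ≤ n) : P2 (2^e * n) ↔ P2 n := by
  constructor
  · rintro ⟨c, d, hdc, heq⟩
    have hec : e ≤ c := by
      have h2 : 2^d < 2^c := Nat.pow_lt_pow_right (by norm_num) hdc
      have h3 : 2^e < 2^(c+1) := by
        rw [pow_succ]
        have h4 : 2^e * 1 ≤ 2^e * n := Nat.mul_le_mul_left _ hn
        omega
      have := (Nat.pow_lt_pow_iff_right (show 1 < 2 by norm_num)).mp h3
      omega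
    have hed : e ≤ d := by
      by_contra hde
      push_neg at hde
      have h1 : (2^e * n) % 2^e = 0 := by simp [Nat.mul_mod_right]
      have hdlt : 2^d < 2^e := Nat.pow_lt_pow_right (by norm_num) hde
      rw [heq, Nat.add_mod, pow2_mod hec, Nat.zero_add, Nat.mod_mod_of_dvd _ dvd_rfl,
        Nat.mod_eq_of_lt hdlt] at h1
      have := pow_pos2 d
      omega
    have h1 : 2^e * n = 2^e * (2^(c-e) + 2^(d-e)) := by
      rw [heq, Nat.mul_add, ← pow_add, ← pow_add, Nat.add_sub_cancel' hec, Nat.add_sub_cancel' hed]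
    have h2 : n = 2^(c-e) + 2^(d-e) := Nat.eq_of_mul_eq_mul_left (pow_pos2 e) h1
    exact ⟨c - e, d - e, by omega, h2⟩
  · rintro ⟨c, d, hdc, rfl⟩
    exact ⟨e + c, e + d, by omega, by rw [Nat.mul_add, ← pow_add, ← pow_add]⟩

lemma g_one_iff {m : ℕ} (h : P1 m) : g m = 1 := by simp [g, h]

lemma g_scale {e n : ℕ} : g (2^e * n) = g n := by
  rcases Nat.eq_zero_or_pos n with rfl | hn
  · simp
  · by_cases h1 : P1 n
    · rw [g_one_iff h1, g_one_iff ((P1_scale hn).mpr h1)]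
    · by_cases h2 : P2 n
      · have h1' : ¬ P1 (2^e * n) := fun h => h1 ((P1_scale hn).mp h)
        simp [g, h1, h2, h1', (P2_scale hn).mpr h2]
      · have h1' : ¬ P1 (2^e * n) := fun h => h1 ((P1_scale hn).mp h)
        have h2' : ¬ P2 (2^e * n) := fun h => h2 ((P2_scale hn).mp h)
        simp [g, h1, h2, h1', h2']

lemma two_mul_gg (a b : ℕ) : 2 * (g a * g b) = if P1 a ∧ P1 b then (2 : ZMod 4) else 0 := by
  unfold g
  split_ifs <;> first | decide | tauto

lemma gsq {k : ℕ} (h : ¬ P1 k) : g k * g k = 0 := by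
  unfold g
  split_ifs <;> first | decide | tauto

lemma g_conv {m : ℕ} (hm : 2 ≤ m) : (∑ a ∈ Finset.Ico 1 m, g a * g (m - a)) = g m := by
  set f : ℕ → ZMod 4 := fun a => g a * g (m - a) with hf
  set L := (Finset.Ico 1 m).filter (fun a => 2*a < m) with hL
  set Md := (Finset.Ico 1 m).filter (fun a => 2*a = m) with hMd
  set U := (Finset.Ico 1 m).filter (fun a => m < 2*a) with hU
  have hsplit : ∑ a ∈ Finset.Ico 1 m, f a = (∑ a ∈ L, f a) + ((∑ a ∈ Md, f a) + ∑ a ∈ U, f a) := by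
    rw [← Finset.sum_filter_add_sum_filter_not (Finset.Ico 1 m) (fun a => 2*a < m) f]
    congr 1
    rw [← Finset.sum_filter_add_sum_filter_not ((Finset.Ico 1 m).filter (fun a => ¬ 2*a < m))
      (fun a => 2*a = m) f]
    congr 1
    · rw [Finset.filter_filter]
      apply Finset.sum_congr _ (fun _ _ => rfl)
      apply Finset.filter_congr
      intro a _
      constructor
      · exact fun h => h.2
      · exact fun h => ⟨by omega, h⟩
    · rw [Finset.filter_filter]
      apply Finset.sum_congr _ (fun _ _ => rfl)
      apply Finset.filter_congr
      intro a _
      constructor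
      · exact fun h => by omega
      · exact fun h => by omega
  have hUL : ∑ a ∈ U, f a = ∑ a ∈ L, f a := by
    apply Finset.sum_nbij' (fun a => m - a) (fun a => m - a)
    · intro a ha
      simp only [hU, hL, Finset.mem_filter, Finset.mem_Ico] at ha ⊢
      omega
    · intro a ha
      simp only [hU, hL, Finset.mem_filter, Finset.mem_Ico] at ha ⊢
      omega
    · intro a ha
      simp only [hU, Finset.mem_filter, Finset.mem_Ico] at ha
      omega
    · intro a ha
      simp only [hL, Finset.mem_filter, Finset.mem_Ico] at ha
      omega
    · intro a ha
      simp only [hU, Finset.mem_filter, Finset.mem_Ico] at ha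
      have h1 : m - (m - a) = a := by omega
      simp only [hf, h1]
      ring
  have hLsum : (∑ a ∈ L, f a) + (∑ a ∈ L, f a) = ∑ a ∈ L, (if P1 a ∧ P1 (m - a) then (2 : ZMod 4) else 0) := by
    rw [← two_mul, Finset.mul_sum]
    exact Finset.sum_congr rfl (fun a _ => two_mul_gg a (m - a))
  have key : ∑ a ∈ Finset.Ico 1 m, f a
      = (∑ a ∈ L, (if P1 a ∧ P1 (m - a) then (2 : ZMod 4) else 0)) + ∑ a ∈ Md, f a := by
    rw [hsplit, hUL, ← hLsum]; ring
  rw [key]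
  by_cases hP1 : P1 m
  · obtain ⟨c, rfl⟩ := hP1
    have hc1 : 1 ≤ c := by
      by_contra h
      interval_cases c <;> omega
    have hA : (∑ a ∈ L, (if P1 a ∧ P1 (2^c - a) then (2 : ZMod 4) else 0)) = 0 := by
      apply Finset.sum_eq_zero
      intro a ha
      simp only [hL, Finset.mem_filter, Finset.mem_Ico] at ha
      rw [if_neg]
      rintro ⟨⟨e, rfl⟩, ⟨f2, hf2⟩⟩
      have heq : 2^e + 2^f2 = 2^c := by omega
      have := pow_add_pow_eq_pow heq
      subst this
      omega
    have hMdeq : Md = {2^(c-1)} := by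
      ext a
      simp only [hMd, Finset.mem_filter, Finset.mem_Ico, Finset.mem_singleton]
      have h1 : 2 * 2^(c-1) = 2^c := by
        rw [← pow_succ']
        congr 1
        omega
      have := pow_pos2 (c-1)
      have := pow_pos2 c
      omega
    have hB : ∑ a ∈ Md, f a = 1 := by
      rw [hMdeq, Finset.sum_singleton]
      have h1 : 2^c - 2^(c-1) = 2^(c-1) := by
        have h2 : 2 * 2^(c-1) = 2^c := by
          rw [← pow_succ']
          congr 1
          omega
        omega
      simp only [hf, h1]
      rw [g_one_iff ⟨c-1, rfl⟩]
      ring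
    rw [hA, hB, g_one_iff ⟨c, rfl⟩]
    ring
  · have hBgen : ∑ a ∈ Md, f a = 0 := by
      apply Finset.sum_eq_zero
      intro a ha
      simp only [hMd, Finset.mem_filter, Finset.mem_Ico] at ha
      simp only [hf]
      have h1 : m - a = a := by omega
      rw [h1]
      apply gsq
      rintro ⟨t, rfl⟩
      exact hP1 ⟨t + 1, by rw [pow_succ']; omega⟩
    by_cases hP2 : P2 m
    · obtain ⟨c, d, hdc, rfl⟩ := hP2
      have hA : (∑ a ∈ L, (if P1 a ∧ P1 (2^c + 2^d - a) then (2 : ZMod 4) else 0)) = 2 := by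
        have hfilter : L.filter (fun a => P1 a ∧ P1 (2^c + 2^d - a)) = {2^d} := by
          ext a
          simp only [hL, Finset.filter_filter, Finset.mem_filter, Finset.mem_Ico,
            Finset.mem_singleton]
          constructor
          · rintro ⟨⟨ha1, ha2⟩, ha3, ⟨e, rfl⟩, ⟨f2, hf2⟩⟩
            have heq : 2^e + 2^f2 = 2^d + 2^c := by omega
            have hef : e < f2 := by
              have h1 : 2^e < 2^f2 := by omega
              exact (Nat.pow_lt_pow_iff_right (show 1 < 2 by norm_num)).mp h1
            rw [min_eq hef hdc heq]
          · rintro rfl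
            have h1 : 2^(d+1) ≤ 2^c := Nat.pow_le_pow_right (by norm_num) (by omega)
            rw [pow_succ'] at h1
            have h2 : 2^d < 2^c := Nat.pow_lt_pow_right (by norm_num) hdc
            have h3 : 2^c + 2^d - 2^d = 2^c := by omega
            have h0 := pow_pos2 d
            exact ⟨⟨by omega, by omega⟩, by omega, ⟨d, rfl⟩, ⟨c, h3⟩⟩
        rw [← Finset.sum_filter, hfilter, Finset.sum_singleton]
      rw [hA, hBgen]
      have hgm : g (2^c + 2^d) = 2 := by
        have hP1' : ¬ P1 (2^c + 2^d) := fun h => by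
          obtain ⟨t, ht⟩ := h
          exact absurd (pow_add_pow_eq_pow (c := t) (e := c) (f := d) (by omega)) (by omega)
        simp [g, hP1', show P2 (2^c + 2^d) from ⟨c, d, hdc, rfl⟩]
      rw [hgm]
      ring
    · have hA : (∑ a ∈ L, (if P1 a ∧ P1 (m - a) then (2 : ZMod 4) else 0)) = 0 := by
        apply Finset.sum_eq_zero
        intro a ha
        simp only [hL, Finset.mem_filter, Finset.mem_Ico] at ha
        rw [if_neg]
        rintro ⟨⟨e, rfl⟩, ⟨f2, hf2⟩⟩
        have heq : m = 2^e + 2^f2 := by omega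
        rcases lt_trichotomy e f2 with h | h | h
        · exact hP2 ⟨f2, e, h, by omega⟩
        · subst h
          exact hP1 ⟨e + 1, by rw [pow_succ']; omega⟩
        · exact hP2 ⟨e, f2, h, heq⟩
      rw [hA, hBgen]
      simp [g, hP1, hP2]

lemma catalan_zmod4 (n : ℕ) : ((catalan n : ℕ) : ZMod 4) = g (n + 1) := by
  induction n using Nat.strong_induction_on with
  | _ n ih =>
    rcases n with _ | k
    · rw [catalan_zero, g_one_iff P1_one]
      norm_num
    · rw [catalan_succ, Nat.cast_sum]
      rw [Fin.sum_univ_eq_sum_range (fun i => ((catalan i * catalan (k - i) : ℕ) : ZMod 4)) (k+1)]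
      have h1 : ∀ i ∈ Finset.range (k+1),
          ((catalan i * catalan (k - i) : ℕ) : ZMod 4) = g (i+1) * g (k - i + 1) := by
        intro i hi
        simp only [Finset.mem_range] at hi
        rw [Nat.cast_mul, ih i (by omega), ih (k - i) (by omega)]
      rw [Finset.sum_congr rfl h1]
      have h2 : (∑ a ∈ Finset.Ico 1 (k+2), g a * g (k + 2 - a))
          = ∑ i ∈ Finset.range (k+1), g (i+1) * g (k - i + 1) := by
        rw [Finset.sum_Ico_eq_sum_range]
        apply Finset.sum_congr (by norm_num)
        intro i hi
        simp only [Finset.mem_range] at hi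
        congr 1
        · congr 1
          omega
        · congr 1
          omega
      rw [← h2, g_conv (by omega)]

lemma two_g (m : ℕ) : 2 * g m = if P1 m then (2:ZMod 4) else 0 := by
  unfold g
  split_ifs <;> decide

lemma u_eq (i : ℕ) : u i = 3 * g i + (if 3 ≤ i then (if P1 (i-2) then (2:ZMod 4) else 0) else 0)
    + (if i = 1 then 2 else 0) := by
  unfold u
  by_cases h1 : 1 ≤ i
  · rw [if_pos h1, catalan_zmod4]
    have he1 : i - 1 + 1 = i := by omega
    rw [he1]
    by_cases h3 : 3 ≤ i
    · rw [if_pos h3, if_pos h3, catalan_zmod4]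
      have he3 : i - 3 + 1 = i - 2 := by omega
      rw [he3, two_g]
    · rw [if_neg h3, if_neg h3, mul_zero]
  · have : i = 0 := by omega
    subst this
    simp [g_zero]

lemma pow8 {e : ℕ} (he : 3 ≤ e) : 8 ≤ 2^e := by
  calc (8:ℕ) = 2^3 := rfl
  _ ≤ 2^e := Nat.pow_le_pow_right (by norm_num) he

lemma case_j0 {e : ℕ} (he : 3 ≤ e) (n : ℕ) : u (2^e * n) = 3 * g n := by
  rcases Nat.eq_zero_or_pos n with rfl | hn
  · simp [u_eq, g_zero]
  · have h8 := pow8 he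
    have hm : 2^e * 1 ≤ 2^e * n := Nat.mul_le_mul_left _ hn
    rw [u_eq, g_scale]
    have h3 : 3 ≤ 2^e * n := by omega
    rw [if_pos h3]
    have hP : ¬ P1 (2^e * n - 2) := by
      rintro ⟨c, hc⟩
      have h4 : (4:ℕ) ∣ 2^e * n := by
        have : (2:ℕ)^2 ∣ 2^e := pow_dvd_pow 2 (by omega)
        exact (show (4:ℕ) = 2^2 from rfl) ▸ this.mul_right n
      rcases c with _ | c
      · have : (2:ℕ)^0 = 1 := rfl
        omega
      · rcases c with _ | c
        · have : (2:ℕ)^1 = 2 := rfl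
          omega
        · have h4c : (4:ℕ) ∣ 2^(c+2) := ⟨2^c, by ring⟩
          omega
    rw [if_neg hP, if_neg (show ¬ (2^e*n = 1) by omega)]
    ring

lemma case_pow {e b : ℕ} (he : 3 ≤ e) (hb : b < e) {n : ℕ} (hn : 1 ≤ n) :
    u (2^e * n + 2^b) = (if b = 1 then 0 else if P1 n then 2 else 0) := by
  have h8 := pow8 he
  have hm : 2^e * 1 ≤ 2^e * n := Nat.mul_le_mul_left _ hn
  have hblt : 2^b < 2^e := Nat.pow_lt_pow_right (by norm_num) hb
  have hbpos := pow_pos2 b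
  rw [u_eq]
  have hP1 : ¬ P1 (2^e * n + 2^b) := K1 hn hbpos hblt
  have hP2 : P2 (2^e*n+2^b) ↔ (P1 n ∧ P1 (2^b)) := K2 hn hbpos hblt
  have hg : g (2^e*n+2^b) = if P1 n then 2 else 0 := by
    unfold g
    rw [if_neg hP1]
    by_cases h : P1 n
    · rw [if_pos (hP2.mpr ⟨h, ⟨b, rfl⟩⟩), if_pos h]
    · rw [if_neg (fun hx => h (hP2.mp hx).1), if_neg h]
  rw [hg]
  have h3 : 3 ≤ 2^e*n+2^b := by omega
  rw [if_pos h3, if_neg (show ¬(2^e*n+2^b = 1) by omega)]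
  rcases eq_or_ne b 1 with rfl | hb1
  · -- j = 2 : middle term is if P1 (2^e n), total 3*x + x = 0
    have heq2 : 2^e*n+2^1-2 = 2^e*n := by
      have : (2:ℕ)^1 = 2 := rfl
      omega
    rw [heq2, if_pos rfl]
    by_cases h : P1 n
    · rw [if_pos h, if_pos ((P1_scale hn).mpr h)]
      decide
    · rw [if_neg h, if_neg (fun hx => h ((P1_scale hn).mp hx))]
      decide
  · have hPm : ¬ P1 (2^e*n+2^b-2) := by
      rcases Nat.eq_zero_or_pos b with rfl | hbpos'
      · rintro ⟨c, hc⟩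
        have h2 : (2:ℕ) ∣ 2^e * n := ((dvd_pow_self 2 (show e ≠ 0 by omega)).mul_right n)
        have h20 : (2:ℕ)^0 = 1 := rfl
        rcases c with _ | c
        · omega
        · have h2c : (2:ℕ) ∣ 2^(c+1) := dvd_pow_self 2 (by omega)
          omega
      · have hb2 : 2 ≤ b := by omega
        have h4 : 4 ≤ 2^b := by
          calc (4:ℕ) = 2^2 := rfl
          _ ≤ 2^b := Nat.pow_le_pow_right (by norm_num) hb2
        have heq : 2^e*n + 2^b - 2 = 2^e*n + (2^b - 2) := by omega
        rw [heq]
        exact K1 hn (by omega) (by omega)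
    rw [if_neg hPm, if_neg hb1]
    split_ifs <;> decide

lemma case_other {e j : ℕ} (he : 3 ≤ e) (hj : j < 2^e) (hj0 : 1 ≤ j) (hjP : ¬ P1 j) {n : ℕ}
    (hn : 1 ≤ n) : u (2^e * n + j) = 0 := by
  have h8 := pow8 he
  have hm : 2^e * 1 ≤ 2^e*n := Nat.mul_le_mul_left _ hn
  have hj3 : 3 ≤ j := by
    by_contra h
    interval_cases j
    · exact hjP P1_one
    · exact hjP P1_two
  rw [u_eq]
  have hP1 : ¬ P1 (2^e*n+j) := K1 hn (by omega) hj
  have hP2 : ¬ P2 (2^e*n+j) := fun h => hjP ((K2 hn (by omega) hj).mp h).2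
  have hg : g (2^e*n+j) = 0 := by
    unfold g
    rw [if_neg hP1, if_neg hP2]
  have heqj : 2^e*n+j-2 = 2^e*n+(j-2) := by omega
  have hPm : ¬ P1 (2^e*n+j-2) := by
    rw [heqj]
    exact K1 hn (by omega) (by omega)
  rw [hg, if_pos (show 3 ≤ 2^e*n+j by omega), if_neg hPm,
    if_neg (show ¬(2^e*n+j = 1) by omega)]
  decide

noncomputable def tailP (c : ZMod 4) : ℕ → ZMod 4 :=
  fun n => if n = 0 then c else if P1 n then 2 else 0

def tail0 (c : ZMod 4) : ℕ → ZMod 4 := fun n => if n = 0 then c else 0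

noncomputable def T : Set (ℕ → ZMod 4) :=
  {u, fun n => u (2*n), fun n => u (2*n+1), fun n => u (4*n), fun n => u (4*n+1),
    fun n => u (4*n+2), fun n => u (4*n+3), fun n => 3 * g n}
    ∪ Set.range tailP ∪ Set.range tail0

lemma T_finite : T.Finite := by
  apply Set.Finite.union
  apply Set.Finite.union
  · exact Set.toFinite _
  · exact Set.finite_range _
  · exact Set.finite_range _

/-- (Theorem 1.1, automaticity part.) `Stiel_p` modulo 4 is 2-automatic:
its 2-kernel is finite. -/
theorem stmt1 : (kKernel 2 u).Finite := by
  apply Set.Finite.subset T_finite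
  rintro f ⟨e, j, hj, rfl⟩
  rcases e with _ | _ | _ | k
  · obtain rfl : j = 0 := by omega
    have hfe : (fun n => u (2^0*n+0)) = u := by
      funext n
      norm_num
    rw [hfe]
    exact Or.inl (Or.inl (by simp))
  · norm_num at hj
    interval_cases j
    · have hfe : (fun n => u (2^1*n+0)) = (fun n => u (2*n)) := by
        funext n
        norm_num
      rw [hfe]
      exact Or.inl (Or.inl (by simp))
    · have hfe : (fun n => u (2^1*n+1)) = (fun n => u (2*n+1)) := by
        funext n
        norm_num
      rw [hfe]
      exact Or.inl (Or.inl (by simp))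
  · norm_num at hj
    interval_cases j
    · have hfe : (fun n => u (2^2*n+0)) = (fun n => u (4*n)) := by
        funext n
        norm_num
      rw [hfe]
      exact Or.inl (Or.inl (by simp))
    · have hfe : (fun n => u (2^2*n+1)) = (fun n => u (4*n+1)) := by
        funext n
        norm_num
      rw [hfe]
      exact Or.inl (Or.inl (by simp))
    · have hfe : (fun n => u (2^2*n+2)) = (fun n => u (4*n+2)) := by
        funext n
        norm_num
      rw [hfe]
      exact Or.inl (Or.inl (by simp))
    · have hfe : (fun n => u (2^2*n+3)) = (fun n => u (4*n+3)) := by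
        funext n
        norm_num
      rw [hfe]
      exact Or.inl (Or.inl (by simp))
  · have he : 3 ≤ k + 3 := by omega
    rcases Nat.eq_zero_or_pos j with rfl | hj0
    · have hfe : (fun n => u (2^(k+3)*n+0)) = (fun n => 3 * g n) := by
        funext n
        rw [Nat.add_zero, case_j0 he]
      rw [hfe]
      exact Or.inl (Or.inl (by simp))
    · by_cases hjP : P1 j
      · obtain ⟨b, rfl⟩ := hjP
        have hb : b < k + 3 := (Nat.pow_lt_pow_iff_right (show 1 < 2 by norm_num)).mp hj
        rcases eq_or_ne b 1 with rfl | hb1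
        · have hfe : (fun n => u (2^(k+3)*n+2^1)) = tail0 (u (2^1)) := by
            funext n
            rcases n with _ | m
            · simp [tail0]
            · simp only [tail0, Nat.succ_ne_zero, if_false]
              rw [case_pow he hb (by omega)]
              simp
          rw [hfe]
          exact Or.inr ⟨_, rfl⟩
        · have hfe : (fun n => u (2^(k+3)*n+2^b)) = tailP (u (2^b)) := by
            funext n
            rcases n with _ | m
            · simp [tailP]
            · simp only [tailP, Nat.succ_ne_zero, if_false]
              rw [case_pow he hb (by omega), if_neg hb1]
          rw [hfe]
          exact Or.inl (Or.inr ⟨_, rfl⟩)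
      · have hfe : (fun n => u (2^(k+3)*n+j)) = tail0 (u j) := by
          funext n
          rcases n with _ | m
          · simp [tail0]
          · simp only [tail0, Nat.succ_ne_zero, if_false]
            rw [case_other he hj hj0 hjP (by omega)]
        rw [hfe]
        exact Or.inr ⟨_, rfl⟩
end

section
/- Let k ≥ 2 and m ≥ 2 be integers, let c = (c_n)_{n≥0} be a sequence of integers whose k-kernel is finite (i.e., c is k-automatic), and let (F_n(x))_{n≥0} be any sequence of polynomials in ℤ[x] satisfying the recurrence F_n(x) = F_{n-1}(x) + c_n·x·F_{n-2}(x) for all n ≥ 2. Write F_n(x) = Σ_{i≥0} a_{n,i} x^i. Then for every i ≥ 0, the sequence (a_{n,i} mod m)_{n≥0} with values in ℤ/mℤ has finite k-kernel, i.e., it is k-automatic. -/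
lemma kKernel_map {α β : Type*} (k : ℕ) (f : α → β) (u : ℕ → α)
    (h : (kKernel k u).Finite) : (kKernel k (fun n => f (u n))).Finite := by
  apply (h.image (fun g => fun n => f (g n))).subset
  rintro g ⟨e, j, hj, rfl⟩
  exact ⟨fun n => u (k ^ e * n + j), ⟨e, j, hj, rfl⟩, rfl⟩

lemma kKernel_mul {α : Type*} [Mul α] (k : ℕ) (u v : ℕ → α)
    (hu : (kKernel k u).Finite) (hv : (kKernel k v).Finite) :
    (kKernel k (fun n => u n * v n)).Finite := by
  apply ((hu.prod hv).image (fun p => fun n => p.1 n * p.2 n)).subset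
  rintro g ⟨e, j, hj, rfl⟩
  exact ⟨(fun n => u (k ^ e * n + j), fun n => v (k ^ e * n + j)),
    ⟨⟨e, j, hj, rfl⟩, ⟨e, j, hj, rfl⟩⟩, rfl⟩

lemma kKernel_shift {α : Type*} (k t : ℕ) (u : ℕ → α)
    (h : (kKernel k u).Finite) : (kKernel k (fun n => u (n + t))).Finite := by
  apply ((h.prod (Set.finite_Iic t)).image (fun p => fun n => p.1 (n + p.2))).subset
  rintro g ⟨e, j, hj, rfl⟩
  have hK : 0 < k ^ e := lt_of_le_of_lt (Nat.zero_le j) hj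
  refine ⟨(fun n => u (k ^ e * n + (j + t) % k ^ e), (j + t) / k ^ e),
    ⟨⟨e, _, Nat.mod_lt _ hK, rfl⟩, ?_⟩, ?_⟩
  · simp only [Set.mem_Iic]
    have : j + t < (t + 1) * k ^ e := by nlinarith
    exact Nat.lt_succ_iff.mp ((Nat.div_lt_iff_lt_mul hK).mpr this)
  · funext n
    show u (k ^ e * (n + (j + t) / k ^ e) + (j + t) % k ^ e) = u (k ^ e * n + j + t)
    congr 1
    have := Nat.div_add_mod (j + t) (k ^ e)
    rw [Nat.mul_add]
    omega

lemma kKernel_const {α : Type*} (k : ℕ) (a : α) :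
    (kKernel k (fun _ => a)).Finite := by
  apply (Set.finite_singleton (fun _ : ℕ => a)).subset
  rintro g ⟨e, j, hj, rfl⟩
  simp

lemma kKernel_sum {R : Type*} [CommRing R] [Finite R] (k : ℕ) (u : ℕ → R) (a : R)
    (h : (kKernel k u).Finite) :
    (kKernel k (fun n => a + ∑ t ∈ Finset.range n, u t)).Finite := by
  set V : Submodule R (ℕ → R) := Submodule.span R (kKernel k u) with hV
  have hVfin : (V : Set (ℕ → R)).Finite := by
    have h1 : Module.Finite R V := Module.Finite.span_of_finite R h
    have h2 : Finite V := Module.finite_of_finite R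
    exact V.carrier.toFinite
  apply ((hVfin.prod hVfin).image
    (fun p => fun n => a + (∑ t ∈ Finset.range n, p.1 t) + p.2 n)).subset
  rintro g ⟨e, j, hj, rfl⟩
  have hw : (fun n => ∑ r ∈ Finset.range (k ^ e), u (k ^ e * n + r)) ∈ V := by
    have heq : (fun n => ∑ r ∈ Finset.range (k ^ e), u (k ^ e * n + r))
        = ∑ r ∈ Finset.range (k ^ e), (fun n => u (k ^ e * n + r)) := by
      funext n; simp
    rw [heq]
    exact Submodule.sum_mem _ fun r hr =>
      Submodule.subset_span ⟨e, r, Finset.mem_range.mp hr, rfl⟩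
  have hq : (fun n => ∑ r ∈ Finset.range j, u (k ^ e * n + r)) ∈ V := by
    have heq : (fun n => ∑ r ∈ Finset.range j, u (k ^ e * n + r))
        = ∑ r ∈ Finset.range j, (fun n => u (k ^ e * n + r)) := by
      funext n; simp
    rw [heq]
    exact Submodule.sum_mem _ fun r hr =>
      Submodule.subset_span ⟨e, r, lt_trans (Finset.mem_range.mp hr) hj, rfl⟩
  refine ⟨(_, _), ⟨hw, hq⟩, ?_⟩
  funext n
  have key : ∀ nn : ℕ, ∑ t ∈ Finset.range (k ^ e * nn), u t
      = ∑ t ∈ Finset.range nn, ∑ r ∈ Finset.range (k ^ e), u (k ^ e * t + r) := by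
    intro nn
    induction nn with
    | zero => simp
    | succ n ih => rw [Nat.mul_succ, Finset.sum_range_add, ih, Finset.sum_range_succ]
  show a + (∑ t ∈ Finset.range n, ∑ r ∈ Finset.range (k ^ e), u (k ^ e * t + r))
      + (∑ r ∈ Finset.range j, u (k ^ e * n + r))
      = a + ∑ t ∈ Finset.range (k ^ e * n + j), u t
  rw [Finset.sum_range_add, key n, add_assoc]

lemma kKernel_prepend {α : Type*} (k : ℕ) (u : ℕ → α)
    (h : (kKernel k (fun n => u (n + 1))).Finite) : (kKernel k u).Finite := by
  apply (h.union (h.image (fun g => fun n => Nat.casesOn n (u 0) g))).subset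
  rintro g ⟨e, j, hj, rfl⟩
  have hK : 0 < k ^ e := lt_of_le_of_lt (Nat.zero_le j) hj
  rcases Nat.eq_zero_or_pos j with rfl | hjpos
  · right
    refine ⟨fun n => u (k ^ e * n + (k ^ e - 1) + 1), ⟨e, k ^ e - 1, by omega, rfl⟩, ?_⟩
    funext n
    cases n with
    | zero => simp
    | succ n =>
      show u (k ^ e * n + (k ^ e - 1) + 1) = u (k ^ e * (n + 1) + 0)
      congr 1
      have : k ^ e * (n + 1) = k ^ e * n + k ^ e := by ring
      omega
  · left
    refine ⟨e, j - 1, by omega, ?_⟩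
    funext n
    show u (k ^ e * n + j) = u (k ^ e * n + (j - 1) + 1)
    congr 1
    omega

lemma kKernel_rec {R : Type*} [CommRing R] [Finite R] (k : ℕ) (u v : ℕ → R)
    (hv : (kKernel k v).Finite) (hrec : ∀ n, u (n + 2) = u (n + 1) + v n) :
    (kKernel k u).Finite := by
  apply kKernel_prepend
  have heq : ∀ n, u (n + 1) = u 1 + ∑ t ∈ Finset.range n, v t := by
    intro n
    induction n with
    | zero => simp
    | succ n ih => rw [Finset.sum_range_succ, ← add_assoc, ← ih]; exact hrec n
  have : (fun n => u (n + 1)) = fun n => u 1 + ∑ t ∈ Finset.range n, v t := funext heq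
  rw [this]
  exact kKernel_sum k v (u 1) hv

/-- (Proposition 3.1.) If `c` is a `k`-automatic integer sequence and `(F n)` is a sequence
of integer polynomials satisfying `F n = F (n-1) + c n · x · F (n-2)` for `n ≥ 2`, then for
every `i` the coefficient sequence `(coeff of x^i in F n, mod m)` is `k`-automatic. -/
theorem stmt4 (k m : ℕ) (hk : 2 ≤ k) (hm : 2 ≤ m)
    (c : ℕ → ℤ) (hc : (kKernel k c).Finite)
    (F : ℕ → Polynomial ℤ)
    (hF : ∀ n : ℕ, F (n + 2) = F (n + 1) + Polynomial.C (c (n + 2)) * Polynomial.X * F n) :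
    ∀ i : ℕ, (kKernel k (fun n => (((F n).coeff i : ℤ) : ZMod m))).Finite := by
  haveI : NeZero m := ⟨by omega⟩
  intro i
  induction i with
  | zero =>
    apply kKernel_rec k _ (fun _ => (0 : ZMod m)) (kKernel_const k 0)
    intro n
    have h0 : (F (n + 2)).coeff 0 = (F (n + 1)).coeff 0 := by
      rw [hF n]
      simp [Polynomial.mul_coeff_zero]
    rw [h0, add_zero]
  | succ i ih =>
    apply kKernel_rec k _
      (fun n => ((c (n + 2) : ℤ) : ZMod m) * (((F n).coeff i : ℤ) : ZMod m))
    · exact kKernel_mul k _ _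
        (kKernel_shift k 2 _ (kKernel_map k (fun z : ℤ => (z : ZMod m)) c hc)) ih
    · intro n
      have h0 : (F (n + 2)).coeff (i + 1)
          = (F (n + 1)).coeff (i + 1) + c (n + 2) * (F n).coeff i := by
        rw [hF n]
        simp [mul_assoc, Polynomial.coeff_X_mul]
      rw [h0]
      push_cast
      ring
end

section
/- Let k ≥ 2 be an integer and let a = (a_n)_{n≥0} be a sequence with values in {-1,1} ⊆ ℤ whose k-kernel is finite (i.e., a is k-automatic). For n ≥ 0 set b_n = ∏_{i=0}^{2n} a_i, and for n ≥ 1 set H_n = ∏_{i=0}^{n-1} b_i, so that by Heilermann's formula H_n = a_0^n (a_1 a_2)^{n-1}(a_3 a_4)^{n-2}···(a_{2n-3} a_{2n-2}) is the n-th order Hankel determinant of the power series expansion of Stiel_a(x). Then the sequence (H_n)_{n≥1} (with values in {-1,1}) has finite k-kernel; in particular, for every integer m ≥ 2 the sequence (H_n mod m)_{n≥1} is k-automatic. -/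
namespace Stmt5Aux

variable {α β : Type*}

lemma self_mem (k : ℕ) (u : ℕ → α) : u ∈ kKernel k u :=
  ⟨0, 0, by norm_num, by funext n; simp⟩

lemma comp_subset (k : ℕ) (g : α → β) (u : ℕ → α) :
    kKernel k (fun n => g (u n)) ⊆ (fun f => fun n => g (f n)) '' kKernel k u := by
  rintro f ⟨e, j, hj, rfl⟩
  exact ⟨fun n => u (k ^ e * n + j), ⟨e, j, hj, rfl⟩, rfl⟩

lemma closed_step {k : ℕ} (hk : 0 < k) (u : ℕ → α) {g : ℕ → α}
    (hg : g ∈ kKernel k u) {r : ℕ} (hr : r < k) :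
    (fun n => g (k * n + r)) ∈ kKernel k u := by
  obtain ⟨e, i, hi, rfl⟩ := hg
  refine ⟨e + 1, k ^ e * r + i, ?_, ?_⟩
  · calc k ^ e * r + i < k ^ e * r + k ^ e := by omega
      _ = k ^ e * (r + 1) := by ring
      _ ≤ k ^ e * k := Nat.mul_le_mul_left _ hr
      _ = k ^ (e + 1) := (pow_succ k e).symm
  · funext n; congr 1; rw [pow_succ]; ring

lemma subset_of_closed {k : ℕ} (hk : 0 < k) {u : ℕ → α} {M : Set (ℕ → α)}
    (hu : u ∈ M) (hcl : ∀ j < k, ∀ f ∈ M, (fun n => f (k * n + j)) ∈ M) :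
    kKernel k u ⊆ M := by
  have key : ∀ e, ∀ j, j < k ^ e → (fun n => u (k ^ e * n + j)) ∈ M := by
    intro e
    induction e with
    | zero =>
      intro j hj
      rw [pow_zero] at hj
      interval_cases j
      simpa using hu
    | succ e ih =>
      intro j hj
      have hKp : 0 < k ^ e := pow_pos hk e
      have hr : j / k ^ e < k := by
        rw [Nat.div_lt_iff_lt_mul hKp]
        calc j < k ^ (e + 1) := hj
          _ = k * k ^ e := by ring
      have h1 : (fun n => u (k ^ e * n + j % k ^ e)) ∈ M :=
        ih _ (Nat.mod_lt _ hKp)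
      have h2 := hcl (j / k ^ e) hr _ h1
      have hmod : k ^ e * (j / k ^ e) + j % k ^ e = j := Nat.div_add_mod j (k ^ e)
      have heq : (fun n => u (k ^ (e + 1) * n + j)) =
          fun n => u (k ^ e * (k * n + j / k ^ e) + j % k ^ e) := by
        funext n; congr 1
        calc k ^ (e + 1) * n + j
            = k ^ e * k * n + (k ^ e * (j / k ^ e) + j % k ^ e) := by
              rw [hmod, pow_succ]
          _ = k ^ e * (k * n + j / k ^ e) + j % k ^ e := by ring
      rw [heq]; exact h2
  rintro f ⟨e, j, hj, rfl⟩
  exact key e j hj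

lemma affine_finite {k : ℕ} (hk : 0 < k) (u : ℕ → α) (hu : (kKernel k u).Finite)
    (c d : ℕ) : (kKernel k (fun n => u (c * n + d))).Finite := by
  have hsub : kKernel k (fun n => u (c * n + d)) ⊆
      (fun p : (ℕ → α) × ℕ => fun n => p.1 (c * n + p.2)) ''
        (kKernel k u ×ˢ Set.Iic (c + d)) := by
    rintro f ⟨e, j, hj, rfl⟩
    have hK : 0 < k ^ e := pow_pos hk e
    refine ⟨⟨fun m => u (k ^ e * m + (c * j + d) % k ^ e), (c * j + d) / k ^ e⟩,
      ⟨⟨e, _, Nat.mod_lt _ hK, rfl⟩, Set.mem_Iic.mpr ?_⟩, ?_⟩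
    · have h2 : c * j ≤ c * k ^ e := Nat.mul_le_mul_left _ (le_of_lt hj)
      have h3 : d ≤ d * k ^ e := Nat.le_mul_of_pos_right _ hK
      have h1 : c * j + d ≤ (c + d) * k ^ e := by
        have h4 : (c + d) * k ^ e = c * k ^ e + d * k ^ e := by ring
        omega
      calc (c * j + d) / k ^ e ≤ (c + d) * k ^ e / k ^ e := Nat.div_le_div_right h1
        _ = c + d := Nat.mul_div_cancel _ hK
    · funext n
      show u (k ^ e * (c * n + (c * j + d) / k ^ e) + (c * j + d) % k ^ e)
        = u (c * (k ^ e * n + j) + d)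
      congr 1
      have hmod : k ^ e * ((c * j + d) / k ^ e) + (c * j + d) % k ^ e = c * j + d :=
        Nat.div_add_mod _ _
      calc k ^ e * (c * n + (c * j + d) / k ^ e) + (c * j + d) % k ^ e
          = k ^ e * c * n + (k ^ e * ((c * j + d) / k ^ e) + (c * j + d) % k ^ e) := by
            ring
        _ = k ^ e * c * n + (c * j + d) := by rw [hmod]
        _ = c * (k ^ e * n + j) + d := by ring
  exact ((hu.prod (Set.finite_Iic _)).image _).subset hsub

lemma add_finite {M : Type*} [Add M] (k : ℕ) (u v : ℕ → M)
    (hu : (kKernel k u).Finite) (hv : (kKernel k v).Finite) :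
    (kKernel k (fun n => u n + v n)).Finite := by
  have hsub : kKernel k (fun n => u n + v n) ⊆
      Set.image2 (fun f g => fun n => f n + g n) (kKernel k u) (kKernel k v) := by
    rintro f ⟨e, j, hj, rfl⟩
    exact Set.mem_image2.mpr ⟨_, ⟨e, j, hj, rfl⟩, _, ⟨e, j, hj, rfl⟩, rfl⟩
  exact (hu.image2 _ hv).subset hsub

lemma sum_range_mul {M : Type*} [AddCommMonoid M] (f : ℕ → M) (k n : ℕ) :
    ∑ i ∈ Finset.range (k * n), f i =
      ∑ m ∈ Finset.range n, ∑ r ∈ Finset.range k, f (k * m + r) := by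
  induction n with
  | zero => simp
  | succ n ih =>
    rw [Nat.mul_succ, Finset.sum_range_add, ih, Finset.sum_range_succ]

def PS (g : ℕ → ZMod 2) : ℕ → ZMod 2 := fun n => ∑ i ∈ Finset.range n, g i

lemma ps_finite {k : ℕ} (hk : 0 < k) (u : ℕ → ZMod 2) (hu : (kKernel k u).Finite) :
    (kKernel k (PS u)).Finite := by
  classical
  set S : Set (ℕ → ZMod 2) := kKernel k u ∪ PS '' kKernel k u with hSdef
  have hSfin : S.Finite := hu.union (hu.image _)
  have hNfin : (↑(Submodule.span (ZMod 2) S) : Set (ℕ → ZMod 2)).Finite := by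
    have h1 : (Submodule.span (ZMod 2) S).FG := Submodule.fg_span hSfin
    have h2 : Module.Finite (ZMod 2) (Submodule.span (ZMod 2) S) :=
      Module.Finite.iff_fg.mpr h1
    have h3 : Finite (Submodule.span (ZMod 2) S) := Module.finite_of_finite (ZMod 2)
    exact (Submodule.span (ZMod 2) S : Set (ℕ → ZMod 2)).toFinite
  refine hNfin.subset (subset_of_closed hk ?_ ?_)
  · exact Submodule.subset_span (Or.inr ⟨u, self_mem k u, rfl⟩)
  · intro j hj f hf
    let L : (ℕ → ZMod 2) →ₗ[ZMod 2] (ℕ → ZMod 2) :=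
      { toFun := fun g => fun n => g (k * n + j)
        map_add' := fun g h => rfl
        map_smul' := fun cc g => rfl }
    have hLS : ∀ s ∈ S, L s ∈ Submodule.span (ZMod 2) S := by
      rintro s (hs | ⟨g, hg, rfl⟩)
      · exact Submodule.subset_span (Or.inl (closed_step hk u hs hj))
      · have heq : L (PS g) = (∑ r ∈ Finset.range k, PS (fun m => g (k * m + r)))
            + ∑ r ∈ Finset.range j, (fun m => g (k * m + r)) := by
          funext n
          simp only [Pi.add_apply, Finset.sum_apply, PS, L, LinearMap.coe_mk,
            AddHom.coe_mk]
          rw [Finset.sum_range_add, sum_range_mul, Finset.sum_comm]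
        rw [heq]
        refine Submodule.add_mem _ (Submodule.sum_mem _ fun r hr => ?_)
          (Submodule.sum_mem _ fun r hr => ?_)
        · exact Submodule.subset_span
            (Or.inr ⟨_, closed_step hk u hg (Finset.mem_range.mp hr), rfl⟩)
        · exact Submodule.subset_span
            (Or.inl (closed_step hk u hg (lt_trans (Finset.mem_range.mp hr) hj)))
    have hle : Submodule.span (ZMod 2) S ≤ (Submodule.span (ZMod 2) S).comap L :=
      Submodule.span_le.mpr hLS
    exact hle hf

lemma const_finite (k : ℕ) (x : α) : (kKernel k (fun _ => x)).Finite := by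
  apply (Set.finite_singleton (fun _ : ℕ => x)).subset
  rintro f ⟨e, j, hj, rfl⟩
  rfl

end Stmt5Aux

open Stmt5Aux in
/-- If `a` is a `k`-automatic `±1`-sequence, `b n = ∏_{i=0}^{2n} a i` and
`H n = ∏_{i=0}^{n-1} b i` (by Heilermann's formula, `H n` is the `n`-th order Hankel
determinant of `Stiel_a(x)`), then the sequence `(H n)_{n ≥ 1}` has finite `k`-kernel;
in particular for every `m ≥ 2` the sequence `(H n mod m)_{n ≥ 1}` is `k`-automatic. -/
theorem stmt5 (k : ℕ) (hk : 2 ≤ k) (a : ℕ → ℤ)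
    (ha : ∀ n, a n = 1 ∨ a n = -1) (haut : (kKernel k a).Finite)
    (b H : ℕ → ℤ)
    (hb : ∀ n, b n = ∏ i ∈ Finset.range (2 * n + 1), a i)
    (hH : ∀ n, H n = ∏ i ∈ Finset.range n, b i) :
    (kKernel k (fun n => H (n + 1))).Finite ∧
      ∀ m : ℕ, 2 ≤ m → (kKernel k (fun n => ((H (n + 1) : ℤ) : ZMod m))).Finite := by
  classical
  have hk0 : 0 < k := by omega
  -- the exponent sequence
  set ee : ℕ → ZMod 2 := fun n => if a n = 1 then 0 else 1 with hee
  have heefin : (kKernel k ee).Finite := by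
    refine (haut.image _).subset (comp_subset k (fun x : ℤ => if x = 1 then (0 : ZMod 2) else 1) a)
  -- φ
  set φ : ZMod 2 → ℤ := fun x => if x = 0 then 1 else -1 with hφ
  have hφadd : ∀ x y : ZMod 2, φ (x + y) = φ x * φ y := by decide
  have hφzero : φ 0 = 1 := by decide
  have hφa : ∀ n, a n = φ (ee n) := by
    intro n
    rcases ha n with h | h
    · simp [hee, hφ, h]
    · have h1 : ¬ a n = 1 := by rw [h]; decide
      simp [hee, hφ, h, h1]
  have hφsum : ∀ (n : ℕ) (f : ℕ → ZMod 2),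
      φ (∑ i ∈ Finset.range n, f i) = ∏ i ∈ Finset.range n, φ (f i) := by
    intro n f
    induction n with
    | zero => simpa using hφzero
    | succ n ih => rw [Finset.sum_range_succ, Finset.prod_range_succ, hφadd, ih]
  -- c sequence
  set cs : ℕ → ZMod 2 := fun n => ee (2 * n + 1) + ee (2 * n + 2) with hcs
  have hcsfin : (kKernel k cs).Finite :=
    add_finite k _ _ (affine_finite hk0 ee heefin 2 1) (affine_finite hk0 ee heefin 2 2)
  -- B sequence
  set Bs : ℕ → ZMod 2 := fun n => ee 0 + PS cs n with hBs
  have hBsfin : (kKernel k Bs).Finite :=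
    add_finite k _ _ (const_finite k (ee 0)) (ps_finite hk0 cs hcsfin)
  have hBval : ∀ n, Bs n = ∑ t ∈ Finset.range (2 * n + 1), ee t := by
    intro n
    induction n with
    | zero => simp [hBs, PS]
    | succ n ih =>
      have h2 : 2 * (n + 1) + 1 = (2 * n + 1) + 1 + 1 := by ring
      rw [h2, Finset.sum_range_succ, Finset.sum_range_succ, ← ih]
      show ee 0 + PS cs (n + 1) = _
      rw [show PS cs (n + 1) = PS cs n + cs n from Finset.sum_range_succ _ _]
      show ee 0 + (PS cs n + (ee (2 * n + 1) + ee (2 * n + 2))) = _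
      have h3 : (2 * n + 1) + 1 = 2 * n + 2 := by ring
      rw [h3]
      show _ = ee 0 + PS cs n + ee (2 * n + 1) + ee (2 * n + 2)
      ring
  -- E sequence
  set Es : ℕ → ZMod 2 := PS Bs with hEs
  have hEsfin : (kKernel k Es).Finite := ps_finite hk0 Bs hBsfin
  have hE'fin : (kKernel k (fun n => Es (n + 1))).Finite := by
    have := affine_finite hk0 Es hEsfin 1 1
    simpa using this
  -- H n = φ (Es n)
  have hbB : ∀ n, b n = φ (Bs n) := by
    intro n
    rw [hb n, hBval n, hφsum]
    exact Finset.prod_congr rfl fun i _ => hφa i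
  have hHE : ∀ n, H n = φ (Es n) := by
    intro n
    rw [hH n]
    show _ = φ (∑ i ∈ Finset.range n, Bs i)
    rw [hφsum]
    exact Finset.prod_congr rfl fun i _ => hbB i
  constructor
  · have heq : (fun n => H (n + 1)) = fun n => φ ((fun m => Es (m + 1)) n) := by
      funext n; exact hHE (n + 1)
    rw [heq]
    exact (hE'fin.image _).subset (comp_subset k φ _)
  · intro m hm
    have heq : (fun n => ((H (n + 1) : ℤ) : ZMod m))
        = fun n => (fun x : ZMod 2 => ((φ x : ℤ) : ZMod m)) ((fun m' => Es (m' + 1)) n) := by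
      funext n; rw [hHE (n + 1)]
    rw [heq]
    exact (hE'fin.image _).subset
      (comp_subset k (fun x : ZMod 2 => ((φ x : ℤ) : ZMod m)) (fun n => Es (n + 1)))
end

section
/- Let p be the paperfolding sequence. For every n ≥ 2 the following hold: (i) p_{2^n + j} = p_j for all 0 ≤ j ≤ 2^{n-1} − 2; (ii) p_{2^n + 2^{n-1} − 1} = −1; (iii) p_{2^n + 2^{n-1} + j} = p_{2^{n-1} + j} for all 0 ≤ j ≤ 2^{n-1} − 1. (Equivalently, the block p_{2^n}···p_{2^{n+1}−1} equals p_0···p_{2^{n-1}−2} followed by −1 followed by p_{2^{n-1}}···p_{2^n−1}, reflecting that σ^n(a) and σ^n(c) differ only in the last letter for the paperfolding substitution σ.) -/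
/-- The block structure of the paperfolding sequence: for `n ≥ 2`, the block
`p_{2^n} ⋯ p_{2^{n+1}-1}` equals `p_0 ⋯ p_{2^{n-1}-2}` followed by `-1` followed by
`p_{2^{n-1}} ⋯ p_{2^n-1}`. -/
theorem stmt6 (p : ℕ → ℤ) (hp0 : p 0 = 1)
    (hp4 : ∀ n, p (4 * n) = 1) (hp42 : ∀ n, p (4 * n + 2) = -1)
    (hpodd : ∀ n, p (2 * n + 1) = p n) :
    ∀ n : ℕ, 2 ≤ n →
      (∀ j : ℕ, j ≤ 2 ^ (n - 1) - 2 → p (2 ^ n + j) = p j) ∧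
      p (2 ^ n + 2 ^ (n - 1) - 1) = -1 ∧
      (∀ j : ℕ, j ≤ 2 ^ (n - 1) - 1 → p (2 ^ n + 2 ^ (n - 1) + j) = p (2 ^ (n - 1) + j)) := by
  -- even positions: p depends only on value mod 4
  have heven : ∀ n : ℕ, 2 ≤ n → ∀ k : ℕ, p (2 ^ n + 2 * k) = p (2 * k) := by
    intro n hn k
    have h2 : 2 ^ n = 4 * 2 ^ (n - 2) := by
      rw [show (4:ℕ) = 2 ^ 2 by norm_num, ← pow_add]
      congr 1; omega
    rcases Nat.even_or_odd k with ⟨k', rfl⟩ | ⟨k', rfl⟩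
    · have e1 : 2 ^ n + 2 * (k' + k') = 4 * (2 ^ (n - 2) + k') := by rw [h2]; ring
      have e2 : 2 * (k' + k') = 4 * k' := by ring
      rw [e1, e2, hp4, hp4]
    · have e1 : 2 ^ n + 2 * (2 * k' + 1) = 4 * (2 ^ (n - 2) + k') + 2 := by rw [h2]; ring
      have e2 : 2 * (2 * k' + 1) = 4 * k' + 2 := by ring
      rw [e1, e2, hp42, hp42]
  -- part (i)
  have lem1 : ∀ n : ℕ, 2 ≤ n → ∀ j : ℕ, j ≤ 2 ^ (n - 1) - 2 → p (2 ^ n + j) = p j := by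
    intro n hn
    induction n, hn using Nat.le_induction with
    | base =>
      intro j hj
      interval_cases j
      rw [show 2 ^ 2 + 0 = 4 * 1 by norm_num, hp4, hp0]
    | succ n hn ih =>
      intro j hj
      have hM : 2 ≤ 2 ^ (n - 1) := by
        calc (2:ℕ) = 2 ^ 1 := by norm_num
        _ ≤ 2 ^ (n - 1) := Nat.pow_le_pow_right (by norm_num) (by omega)
      have hnn : 2 ^ n = 2 * 2 ^ (n - 1) := by
        rw [← pow_succ']; congr 1; omega
      rcases Nat.even_or_odd j with ⟨k, rfl⟩ | ⟨k, rfl⟩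
      · have : k + k = 2 * k := by ring
        rw [this]; exact heven (n + 1) (by omega) k
      · have hk : k ≤ 2 ^ (n - 1) - 2 := by
          simp only [Nat.add_sub_cancel] at hj
          omega
        have e1 : 2 ^ (n + 1) + (2 * k + 1) = 2 * (2 ^ n + k) + 1 := by ring
        rw [e1, hpodd, hpodd]
        exact ih k hk
  -- part (ii): p (3 * 2^k - 1) = -1 for k ≥ 1
  have lem2 : ∀ k : ℕ, 1 ≤ k → p (3 * 2 ^ k - 1) = -1 := by
    intro k hk
    induction k, hk using Nat.le_induction with
    | base =>
      rw [show 3 * 2 ^ 1 - 1 = 2 * 2 + 1 by norm_num, hpodd,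
        show (2:ℕ) = 4 * 0 + 2 by norm_num, hp42]
    | succ k hk ih =>
      have h1 : 1 ≤ 2 ^ k := Nat.one_le_two_pow
      have e1 : 3 * 2 ^ (k + 1) - 1 = 2 * (3 * 2 ^ k - 1) + 1 := by
        rw [pow_succ]; omega
      rw [e1, hpodd]; exact ih
  -- part (iii)
  have lem3 : ∀ n : ℕ, 2 ≤ n → ∀ m : ℕ, 2 ^ (n - 1) ≤ m → m ≤ 2 ^ n - 1 →
      p (2 ^ n + m) = p m := by
    intro n hn
    induction n, hn using Nat.le_induction with
    | base =>
      intro m hm1 hm2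
      norm_num at hm1 hm2
      interval_cases m
      · rw [show 2 ^ 2 + 2 = 4 * 1 + 2 by norm_num, show (2:ℕ) = 4 * 0 + 2 by norm_num,
          hp42, hp42]
      · rw [show 2 ^ 2 + 3 = 2 * 3 + 1 by norm_num, hpodd]
    | succ n hn ih =>
      intro m hm1 hm2
      have hM : 2 ≤ 2 ^ (n - 1) := by
        calc (2:ℕ) = 2 ^ 1 := by norm_num
        _ ≤ 2 ^ (n - 1) := Nat.pow_le_pow_right (by norm_num) (by omega)
      have hnn : 2 ^ n = 2 * 2 ^ (n - 1) := by
        rw [← pow_succ']; congr 1; omega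
      have hnn1 : 2 ^ (n + 1) = 2 * 2 ^ n := by rw [pow_succ]; ring
      rcases Nat.even_or_odd m with ⟨k, rfl⟩ | ⟨k, rfl⟩
      · have : k + k = 2 * k := by ring
        rw [this]; exact heven (n + 1) (by omega) k
      · have hk1 : 2 ^ (n - 1) ≤ k := by simp only [Nat.add_sub_cancel] at hm1; omega
        have hk2 : k ≤ 2 ^ n - 1 := by omega
        have e1 : 2 ^ (n + 1) + (2 * k + 1) = 2 * (2 ^ n + k) + 1 := by ring
        rw [e1, hpodd, hpodd]
        exact ih k hk1 hk2
  intro n hn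
  refine ⟨lem1 n hn, ?_, ?_⟩
  · have hnn : 2 ^ n = 2 * 2 ^ (n - 1) := by rw [← pow_succ']; congr 1; omega
    have e : 2 ^ n + 2 ^ (n - 1) - 1 = 3 * 2 ^ (n - 1) - 1 := by rw [hnn]; ring_nf
    rw [e]; exact lem2 (n - 1) (by omega)
  · intro j hj
    have h1 : 1 ≤ 2 ^ (n - 1) := Nat.one_le_two_pow
    have hnn : 2 ^ n = 2 * 2 ^ (n - 1) := by rw [← pow_succ']; congr 1; omega
    have e : 2 ^ n + 2 ^ (n - 1) + j = 2 ^ n + (2 ^ (n - 1) + j) := by ring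
    rw [e]
    exact lem3 n hn (2 ^ (n - 1) + j) (by omega) (by omega)
end

section
/- Let p be the paperfolding sequence and let P^b, Q^b be defined from the blocks p_{2^n}···p_{2^{n+1}−1}. Then for all n ≥ 4: (1) Q^b_{2^n−2}(x) ≡ 1 + 2(x + x² + x³ + x⁴) + 2(x + x²)·S_{n-2}(x) + 2T_{n-2}(x) (mod 4); (2) Q^b_{2^n−1}(x) ≡ (1 + 2x) + 2x·S_{n-2}(x) + S_{n-1}(x) (mod 4); (3) P^b_{2^n−2}(x) ≡ 2x + 2(1 + x)·S_{n-2}(x) + S_{n-1}(x) (mod 4); (4) P^b_{2^n−1}(x) ≡ (3x + 2x⁵) + 2(1 + x³)·S_{n-2}(x) + 2(1 + x)·T_{n-2}(x) (mod 4). -/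
open Polynomial

/-- The elementary matrix `[[0, c_i x],[1,1]]` used to build the convergents of a
Stieltjes continued fraction. -/
noncomputable def step (c : ℕ → ℤ) (i : ℕ) : Matrix (Fin 2) (Fin 2) (Polynomial ℤ) :=
  !![0, Polynomial.C (c i) * Polynomial.X; 1, 1]

/-- `S_n(x) = Σ_{i=0}^{n} x^{2^i}`. -/
noncomputable def Spoly (n : ℕ) : Polynomial ℤ :=
  ∑ i ∈ Finset.range (n + 1), Polynomial.X ^ (2 ^ i)

/-- `T_n(x) = Σ_{i=3}^{n} Σ_{k=2}^{i-1} x^{2^i + 2^k}` (so `T_2 = 0`). -/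
noncomputable def Tpoly (n : ℕ) : Polynomial ℤ :=
  ∑ i ∈ Finset.Icc 3 n, ∑ k ∈ Finset.Icc 2 (i - 1), Polynomial.X ^ (2 ^ i + 2 ^ k)

noncomputable def stZ (c : ℤ) : Matrix (Fin 2) (Fin 2) (Polynomial ℤ) :=
  !![0, Polynomial.C c * Polynomial.X; 1, 1]

noncomputable def lamZ : ℕ → ℤ → Matrix (Fin 2) (Fin 2) (Polynomial ℤ)
  | 0, d => stZ d
  | (r+1), d => lamZ r 1 * stZ d * lamZ r (-1)

lemma prod_range_two_mul {M : Type*} [Monoid M] (m : ℕ) (f : ℕ → M) :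
    ((List.range (2*m)).map f).prod
      = ((List.range m).map (fun k => f (2*k) * f (2*k+1))).prod := by
  induction m with
  | zero => simp
  | succ m ih =>
      have h1 : 2*(m+1) = (2*m+1)+1 := by ring
      rw [h1, List.range_succ, List.range_succ, List.range_succ]
      simp [ih, mul_assoc]

section PF
variable (p : ℕ → ℤ) (hp0 : p 0 = 1)
    (hp4 : ∀ n, p (4 * n) = 1) (hp42 : ∀ n, p (4 * n + 2) = -1)
    (hpodd : ∀ n, p (2 * n + 1) = p n)

include hp4 hp42 in
lemma p_two_mul (N : ℕ) : p (2*N) = (-1)^N := by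
  rcases Nat.even_or_odd N with ⟨c, hc⟩ | ⟨c, hc⟩
  · have : 2*N = 4*c := by omega
    rw [this, hp4, hc]
    rw [← two_mul, pow_mul]
    norm_num
  · have : 2*N = 4*c + 2 := by omega
    rw [this, hp42, hc, pow_succ, pow_mul]
    norm_num

include hp4 hp42 hpodd in
lemma key_claim : ∀ r m : ℕ,
    ((List.range (2^(m+1+r+1))).map (fun i => stZ (p (2^(m+1+r+1) + i)))).prod
      = ((List.range (2^(m+1))).map
          (fun k => lamZ r ((-1)^k) * stZ (p (2^(m+1) + k)))).prod := by
  intro r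
  induction r with
  | zero =>
      intro m
      have h2 : (2:ℕ)^(m+1+0+1) = 2*(2^(m+1)) := by ring
      rw [h2, prod_range_two_mul]
      refine congrArg List.prod ?_
      apply List.map_congr_left
      intro k _
      have e1 : 2*2^(m+1) + 2*k = 2*(2^(m+1)+k) := by ring
      have e2 : 2*2^(m+1) + (2*k+1) = 2*(2^(m+1)+k)+1 := by ring
      rw [e1, e2, hpodd, p_two_mul p hp4 hp42]
      have e3 : (-1:ℤ)^(2^(m+1)+k) = (-1)^k := by
        rw [pow_add, Even.neg_one_pow ⟨2^m, by ring⟩, one_mul]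
      rw [e3]
      rfl
  | succ r ih =>
      intro m
      have h0 : m+1+(r+1)+1 = (m+1)+1+r+1 := by ring
      rw [h0, ih (m+1)]
      have h2 : (2:ℕ)^(m+1+1) = 2*(2^(m+1)) := by ring
      rw [h2, prod_range_two_mul]
      refine congrArg List.prod ?_
      apply List.map_congr_left
      intro k _
      have e1 : 2*2^(m+1) + 2*k = 2*(2^(m+1)+k) := by ring
      have e2 : 2*2^(m+1) + (2*k+1) = 2*(2^(m+1)+k)+1 := by ring
      rw [e1, e2, hpodd, p_two_mul p hp4 hp42]
      have e3 : (-1:ℤ)^(2^(m+1)+k) = (-1)^k := by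
        rw [pow_add, Even.neg_one_pow ⟨2^m, by ring⟩, one_mul]
      rw [e3]
      have o1 : (-1:ℤ)^(2*k) = 1 := by rw [pow_mul]; norm_num
      have o2 : (-1:ℤ)^(2*k+1) = -1 := by rw [pow_succ, o1]; norm_num
      rw [o1, o2]
      show lamZ r 1 * stZ ((-1)^k) * (lamZ r (-1) * stZ (p (2^(m+1)+k)))
        = lamZ (r+1) ((-1)^k) * stZ (p (2^(m+1)+k))
      rw [show lamZ (r+1) ((-1)^k) = lamZ r 1 * stZ ((-1)^k) * lamZ r (-1) from rfl]
      rw [mul_assoc, mul_assoc, mul_assoc]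

include hp0 hp4 hp42 hpodd in
lemma block_eq (n : ℕ) (hn : 2 ≤ n) :
    ((List.range (2^n)).map (fun i => stZ (p (2^n + i)))).prod
      = lamZ (n-1) (-1) * stZ 1 := by
  obtain ⟨r, rfl⟩ : ∃ r, n = r + 2 := ⟨n - 2, by omega⟩
  have h := key_claim p hp4 hp42 hpodd r 0
  have h0 : 0+1+r+1 = r+2 := by ring
  rw [h0] at h
  rw [h]
  have hp2 : p 2 = -1 := by have := hp42 0; simpa using this
  have hp3 : p 3 = 1 := by
    have h1 := hpodd 1
    have h2 := hpodd 0
    simp at h1 h2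
    rw [show (3:ℕ) = 2*1+1 from rfl, h1, h2, hp0]
  have : (2:ℕ)^(0+1) = 2 := by norm_num
  rw [this]
  rw [show List.range 2 = [0, 1] from rfl]
  simp only [List.map_cons, List.map_nil, List.prod_cons, List.prod_nil, mul_one]
  norm_num [hp2, hp3]
  rw [show lamZ (r+1) (-1) = lamZ r 1 * stZ (-1) * lamZ r (-1) from rfl]
  simp only [mul_assoc]

end PF


local notation "B" => Polynomial (ZMod 4)

noncomputable def sB : ℕ → B
  | 0 => X
  | (m+1) => sB m + X^(2^(m+1))

noncomputable def uB : ℕ → B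
  | 0 => 0
  | 1 => 0
  | (m+2) => uB (m+1) + X^(2^(m+2)-1)

noncomputable def pB : ℕ → B
  | 0 => 0
  | 1 => 0
  | (m+2) => pB (m+1) + X^(2^(m+2)-1) * (sB (m+1) - X - X^2)

noncomputable def tB (m : ℕ) : B := X * pB m

lemma Xpow_pred (k : ℕ) (hk : 1 ≤ k) : (X:B) * X^(k-1) = X^k := by
  conv_rhs => rw [show k = (k-1)+1 by omega]
  rw [pow_succ']

lemma tB_succ (m : ℕ) (hm : 1 ≤ m) :
    tB (m+1) = tB m + X^(2^(m+1)) * (sB m - X - X^2) := by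
  obtain ⟨a, rfl⟩ : ∃ a, m = a + 1 := ⟨m-1, by omega⟩
  show X * pB (a+2) = X * pB (a+1) + _
  rw [show pB (a+2) = pB (a+1) + X^(2^(a+2)-1) * (sB (a+1) - X - X^2) from rfl]
  rw [mul_add, ← mul_assoc, Xpow_pred _ (Nat.one_le_two_pow)]

lemma uB_succ (m : ℕ) (hm : 1 ≤ m) : uB (m+1) = uB m + X^(2^(m+1)-1) := by
  obtain ⟨a, rfl⟩ : ∃ a, m = a + 1 := ⟨m-1, by omega⟩
  rfl

lemma pB_succ (m : ℕ) (hm : 1 ≤ m) :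
    pB (m+1) = pB m + X^(2^(m+1)-1) * (sB m - X - X^2) := by
  obtain ⟨a, rfl⟩ : ∃ a, m = a + 1 := ⟨m-1, by omega⟩
  rfl

lemma rel_xu : ∀ m : ℕ, 1 ≤ m → (X:B) * uB m = sB m - X - X^2 := by
  intro m hm
  induction m, hm using Nat.le_induction with
  | base => show (X:B) * 0 = (X + X^(2^1)) - X - X^2; norm_num
  | succ m hm ih =>
      rw [uB_succ m hm, show sB (m+1) = sB m + X^(2^(m+1)) from rfl, mul_add, ih,
        Xpow_pred _ Nat.one_le_two_pow]
      ring

lemma rel_ss : ∀ m : ℕ, 1 ≤ m →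
    sB m * sB m = sB (m+1) - X + 2*tB m + 2*X*(sB m - X) + 2*X^2*(sB m - X - X^2) := by
  intro m hm
  induction m, hm using Nat.le_induction with
  | base =>
      show (X + X^(2^1)) * (X + X^(2^1)) = ((X + X^(2^1)) + X^(2^2)) - X
        + 2*(X * pB 1) + 2*X*((X + X^(2^1)) - X) + 2*X^2*((X + X^(2^1)) - X - X^2)
      show _ = _ + 2*(X * 0) + _ + _
      norm_num
      ring
  | succ m hm ih =>
      have hqq : (X:B)^(2^(m+1)) * X^(2^(m+1)) = X^(2^(m+2)) := by
        rw [← pow_add]; congr 1; ring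
      rw [show sB (m+1) = sB m + X^(2^(m+1)) from rfl,
          show sB (m+2) = sB (m+1) + X^(2^(m+2)) from rfl,
          show sB (m+1) = sB m + X^(2^(m+1)) from rfl,
          tB_succ m hm]
      have hs1 : sB (m+1) = sB m + X^(2^(m+1)) := rfl
      linear_combination ih + hqq + hs1
  
lemma rel_su : ∀ m : ℕ, 1 ≤ m →
    sB m * uB (m+1) = (1+X+X^2) * uB (m+1) - X^3 + 2*pB m
      + X^(2^(m+1)-1) * (sB m - X - X^2) := by
  intro m hm
  induction m, hm using Nat.le_induction with
  | base =>
      show sB 1 * (uB 1 + X^(2^2-1)) = (1+X+X^2) * (uB 1 + X^(2^2-1)) - X^3 + 2*(0:B)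
        + X^(2^2-1) * (sB 1 - X - X^2)
      show (X + X^(2^1)) * ((0:B) + X^(2^2-1)) = (1+X+X^2) * ((0:B) + X^(2^2-1)) - X^3 + 2*(0:B)
        + X^(2^2-1) * ((X + X^(2^1)) - X - X^2)
      norm_num
      ring
  | succ m hm ih =>
      have hxu : (X:B) * uB (m+2) = sB (m+2) - X - X^2 := rel_xu (m+2) (by omega)
      have hq : (X:B)^(2^(m+1)) = X * X^(2^(m+1)-1) := (Xpow_pred _ Nat.one_le_two_pow).symm
      have hq2 : (X:B)^(2^(m+2)) = X^2 * (X^(2^(m+1)-1) * X^(2^(m+1)-1)) := by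
        rw [← pow_add, ← pow_add]; congr 1
        have h1 := Nat.one_le_two_pow (n := m+1)
        have h2 : (2:ℕ)^(m+2) = 2*2^(m+1) := by ring
        omega
      have hw2 : (X:B)^(2^(m+2)-1) = X * (X^(2^(m+1)-1) * X^(2^(m+1)-1)) := by
        rw [← pow_add, ← pow_succ']; congr 1
        have h1 := Nat.one_le_two_pow (n := m+1)
        have h2 : (2:ℕ)^(m+2) = 2*2^(m+1) := by ring
        omega
      have hp1 : pB (m+1) = pB m + X^(2^(m+1)-1) * (sB m - X - X^2) := pB_succ m hm
      rw [uB_succ (m+1) (by omega)] at *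
      simp only [show m+1+1 = m+2 from rfl] at *
      rw [show sB (m+2) = sB (m+1) + X^(2^(m+2)) from rfl] at hxu
      rw [show sB (m+1) = sB m + X^(2^(m+1)) from rfl] at hxu ⊢
      rw [hq] at hxu ⊢
      rw [hq2] at hxu
      rw [hw2] at hxu ⊢
      rw [hp1]
      linear_combination ih + (X^(2^(m+1)-1)) * hxu

set_option maxHeartbeats 2000000

lemma fin2_mat_eq {α : Type*} {A C : Matrix (Fin 2) (Fin 2) α}
    (h00 : A 0 0 = C 0 0) (h01 : A 0 1 = C 0 1)
    (h10 : A 1 0 = C 1 0) (h11 : A 1 1 = C 1 1) : A = C := by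
  refine Matrix.ext fun i j => ?_
  fin_cases i <;> fin_cases j
  exacts [h00, h01, h10, h11]

noncomputable def stB (c : ℤ) : Matrix (Fin 2) (Fin 2) B := !![0, C ((c : ZMod 4)) * X; 1, 1]

noncomputable def lamB : ℕ → ℤ → Matrix (Fin 2) (Fin 2) B
  | 0, d => stB d
  | (r+1), d => lamB r 1 * stB d * lamB r (-1)

noncomputable def Ee (m : ℕ) : Matrix (Fin 2) (Fin 2) B :=
  !![X + uB (m+2) + 2*X^3 + 2*X^2*(sB (m+1) - X - X^2) + 2*tB (m+1) + 2*pB (m+1),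
     sB (m+2) + 2*X*sB (m+1);
     1 + X - uB (m+2) + 2*X*(sB (m+1) - X - X^2) + 2*pB (m+1),
     1 + 2*(1+X)*(sB (m+1) - X) + 2*X^2*(sB (m+1) - X - X^2) + 2*tB (m+1)]

noncomputable def Ff (m : ℕ) : Matrix (Fin 2) (Fin 2) B :=
  !![-X - uB (m+2) + 2*X^4 + 2*(1+X^2)*sB (m+1) + 2*pB (m+1) + 2*tB (m+1),
     sB (m+2) + 2*X + 2*(1+X)*sB (m+1);
     1 + X + uB (m+2) + 2*(X+X^2+X^3) + 2*X*sB (m+1) + 2*pB (m+1),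
     1 + 2*(X+X^2+X^3+X^4) + 2*(X+X^2)*sB (m+1) + 2*tB (m+1)]

lemma h4B : (4:B) = 0 := by
  rw [← map_ofNat (C : ZMod 4 →+* B) 4, show (4:ZMod 4) = 0 from rfl, map_zero]

lemma lamB_closed : ∀ m : ℕ, lamB (m+2) 1 = Ee m ∧ lamB (m+2) (-1) = Ff m := by
  intro m
  induction m with
  | zero =>
      constructor
      · show lamB 0 1 * stB 1 * lamB 0 (-1) * stB (1) * (lamB 0 1 * stB (-1) * lamB 0 (-1)) = Ee 0
        simp only [lamB, Ee, stB, sB, uB, pB, tB, Int.cast_one, Int.cast_neg, map_one, map_neg,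
          neg_mul, one_mul, Matrix.mul_fin_two]
        simp only [show (2:ℕ)^1 = 2 from rfl, show (2:ℕ)^2-1 = 3 from rfl,
          show (2:ℕ)^2 = 4 from rfl, show (0:ℕ)+1 = 1 from rfl, show (0:ℕ)+2 = 2 from rfl]
        refine fin2_mat_eq ?_ ?_ ?_ ?_ <;>
          simp only [Matrix.cons_val_zero, Matrix.cons_val_one, Matrix.head_cons, Matrix.of_apply,
            Matrix.cons_val']
        · linear_combination (norm := ring1) ((-1)*X^3) * h4B
        · linear_combination (norm := ring1) ((-1)*X^2 + (-1)*X^3) * h4B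
        · ring1
        · linear_combination (norm := ring1) ((-1)*X^2 + (-1)*X^3) * h4B
      · show lamB 0 1 * stB 1 * lamB 0 (-1) * stB (-1) * (lamB 0 1 * stB (-1) * lamB 0 (-1)) = Ff 0
        simp only [lamB, Ff, stB, sB, uB, pB, tB, Int.cast_one, Int.cast_neg, map_one, map_neg,
          neg_mul, one_mul, Matrix.mul_fin_two]
        simp only [show (2:ℕ)^1 = 2 from rfl, show (2:ℕ)^2-1 = 3 from rfl,
          show (2:ℕ)^2 = 4 from rfl, show (0:ℕ)+1 = 1 from rfl, show (0:ℕ)+2 = 2 from rfl]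
        refine fin2_mat_eq ?_ ?_ ?_ ?_ <;>
          simp only [Matrix.cons_val_zero, Matrix.cons_val_one, Matrix.head_cons, Matrix.of_apply,
            Matrix.cons_val']
        · linear_combination (norm := ring1) ((-1)*X^2 + (-1)*X^4) * h4B
        · linear_combination (norm := ring1) ((-1)*X^1 + (-2)*X^2) * h4B
        · linear_combination (norm := ring1) ((-1)*X^1 + (-1)*X^2 + (-1)*X^3) * h4B
        · linear_combination (norm := ring1) ((-1)*X^1 + (-1)*X^2 + (-1)*X^3 + (-1)*X^4) * h4B
  | succ m ih =>
      have h4 : (4:B) = 0 := h4B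
      have hq : (X:B)^(2^(m+2)) = X * X^(2^(m+2)-1) := (Xpow_pred _ Nat.one_le_two_pow).symm
      have hq3 : (X:B)^(2^(m+3)) = X^2 * (X^(2^(m+2)-1) * X^(2^(m+2)-1)) := by
        rw [← pow_add, ← pow_add]; congr 1
        have h1 := Nat.one_le_two_pow (n := m+2)
        have h2 : (2:ℕ)^(m+3) = 2*2^(m+2) := by ring
        omega
      have hw3 : (X:B)^(2^(m+3)-1) = X * (X^(2^(m+2)-1) * X^(2^(m+2)-1)) := by
        rw [← pow_add, ← pow_succ']; congr 1
        have h1 := Nat.one_le_two_pow (n := m+2)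
        have h2 : (2:ℕ)^(m+3) = 2*2^(m+2) := by ring
        omega
      have hu3 : uB (m+3) = uB (m+2) + X^(2^(m+3)-1) := uB_succ (m+2) (by omega)
      rw [hw3] at hu3
      have hp2 : pB (m+2) = pB (m+1) + X^(2^(m+2)-1) * (sB (m+1) - X - X^2) :=
        pB_succ (m+1) (by omega)
      have hs3 : sB (m+3) = sB (m+2) + X^(2^(m+3)) := rfl
      have hs2 : sB (m+2) = sB (m+1) + X^(2^(m+2)) := rfl
      have hxu : (X:B) * uB (m+2) = sB (m+2) - X - X^2 := rel_xu (m+2) (by omega)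
      rw [hs2, hq] at hxu
      have hss := rel_ss (m+1) (by omega)
      simp only [show m+1+1 = m+2 from rfl, tB] at hss
      rw [hs2, hq] at hss
      have hsu := rel_su (m+1) (by omega)
      simp only [show m+1+1 = m+2 from rfl] at hsu
      constructor
      · rw [show lamB (m+3) (1:ℤ) = lamB (m+2) 1 * stB (1) * lamB (m+2) (-1) from rfl,
            ih.1, ih.2]
        simp only [Ee, Ff, stB, Int.cast_one, Int.cast_neg, map_one, map_neg, neg_mul, one_mul,
          Matrix.mul_fin_two, tB]
        simp only [show m+1+2 = m+3 from rfl, show m+1+1 = m+2 from rfl]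
        rw [hu3, hp2, hs3, hs2, hq3, hq]
        refine fin2_mat_eq ?_ ?_ ?_ ?_ <;>
          simp only [Matrix.cons_val_zero, Matrix.cons_val_one, Matrix.head_cons, Matrix.of_apply,
            Matrix.cons_val']
        · linear_combination (norm := ring1) ((1) + (4)*pB (m+1) + uB (m+2) + (X^(2^(m+2)-1)) + (6)*X + (2)*X*pB (m+1) + (6)*X^2 + (6)*X^3) * hxu + ((2) + (6)*X + (6)*X^2 + (4)*X^3 + (4)*X^4) * hss + ((1) + (2)*X^2 + (2)*X^3) * hsu + (sB (m+1) + (2)*sB (m+1)*pB (m+1) + (-1)*X + X*pB (m+1)^2 + (5)*X*sB (m+1) + (3)*X*sB (m+1)*pB (m+1) + X*(X^(2^(m+2)-1)) + (2)*X*(X^(2^(m+2)-1))*pB (m+1) + (-4)*X^2 + (5)*X^2*pB (m+1) + X^2*pB (m+1)^2 + (8)*X^2*sB (m+1) + (2)*X^2*sB (m+1)*pB (m+1) + (4)*X^2*(X^(2^(m+2)-1)) + X^2*(X^(2^(m+2)-1))*pB (m+1) + X^2*(X^(2^(m+2)-1))*sB (m+1) + (-8)*X^3 + (6)*X^3*pB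 (m+1) + (11)*X^3*sB (m+1) + (2)*X^3*sB (m+1)*pB (m+1) + (3)*X^3*(X^(2^(m+2)-1)) + X^3*(X^(2^(m+2)-1))*sB (m+1) + (-10)*X^4 + (4)*X^4*pB (m+1) + (9)*X^4*sB (m+1) + (2)*X^4*(X^(2^(m+2)-1)) + (-11)*X^5 + (2)*X^5*pB (m+1) + (6)*X^5*sB (m+1) + X^5*(X^(2^(m+2)-1)) + (-9)*X^6 + (2)*X^6*sB (m+1) + (-5)*X^7 + (-3)*X^8) * h4
        · linear_combination (norm := ring1) ((1) + (4)*X + (2)*X*pB (m+1) + (6)*X^2 + (6)*X^3 + (4)*X^4) * hxu + ((3) + (10)*X + (10)*X^2 + (4)*X^3 + (4)*X^4 + (4)*X^5) * hss + ((2)*X^2 + (2)*X^3) * hsu + (sB (m+1) + (-1)*X + (2)*X*pB (m+1) + (6)*X*sB (m+1) + X*sB (m+1)*pB (m+1) + X*(X^(2^(m+2)-1)) + X*(X^(2^(m+2)-1))*sB (m+1) + (-5)*X^2 + (7)*X^2*pB (m+1) + X^2*pB (m+1)^2 + (13)*X^2*sB (m+1) + (2)*X^2*sB (m+1)*pB (m+1)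 + (4)*X^2*(X^(2^(m+2)-1)) + X^2*(X^(2^(m+2)-1))*pB (m+1) + (2)*X^2*(X^(2^(m+2)-1))*sB (m+1) + (-11)*X^3 + (8)*X^3*pB (m+1) + X^3*pB (m+1)^2 + (15)*X^3*sB (m+1) + (2)*X^3*sB (m+1)*pB (m+1) + (4)*X^3*(X^(2^(m+2)-1)) + X^3*(X^(2^(m+2)-1))*sB (m+1) + (-15)*X^4 + (4)*X^4*pB (m+1) + (12)*X^4*sB (m+1) + (2)*X^4*sB (m+1)*pB (m+1) + (2)*X^4*(X^(2^(m+2)-1)) + (-16)*X^5 + (4)*X^5*pB (m+1) + (7)*X^5*sB (m+1) + (2)*X^5*(X^(2^(m+2)-1)) + (-12)*X^6 + (2)*X^6*pB (m+1) + (4)*X^6*sB (m+1) + X^6*(X^(2^(m+2)-1)) + (-7)*X^7 + (2)*X^7*sB (m+1) + (-5)*X^8 + (-3)*X^9) * h4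
        · linear_combination (norm := ring1) ((-1)*uB (m+2) + (-1)*(X^(2^(m+2)-1)) + (-2)*X + (-4)*X^2 + (-4)*X^3) * hxu + ((4) + (8)*X + (12)*X^2 + (12)*X^3 + (4)*X^4) * hss + ((-1)) * hsu + ((2)*sB (m+1) + (2)*sB (m+1)*pB (m+1) + (-1)*(X^(2^(m+2)-1))*sB (m+1) + (-1)*X + (2)*X*pB (m+1) + (3)*X*pB (m+1)^2 + (4)*X*sB (m+1) + (4)*X*sB (m+1)*pB (m+1) + (2)*X*(X^(2^(m+2)-1)) + (-3)*X^2 + (4)*X^2*pB (m+1) + X^2*pB (m+1)^2 + (10)*X^2*sB (m+1) + (6)*X^2*sB (m+1)*pB (m+1) + (2)*X^2*(X^(2^(m+2)-1)) + (-8)*X^3 + (4)*X^3*pB (m+1) + (14)*X^3*sB (m+1) + (2)*X^3*sB (m+1)*pB (m+1) + (2)*X^3*(X^(2^(m+2)-1)) + (-17)*X^4 + (4)*X^4*pB (m+1) + (13)*X^4*sB (m+1) + (2)*X^4*(X^(2^(m+2)-1)) + (-22)*X^5 + (2)*X^5*pB (m+1) + (8)*X^5*sB (m+1) + X^5*(X^(2^(m+2)-1))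 + (-19)*X^6 + (2)*X^6*sB (m+1) + (-11)*X^7 + (-3)*X^8) * h4
        · linear_combination (norm := ring1) ((-1) + (-4)*X + (-2)*X*pB (m+1) + (-6)*X^2 + (-6)*X^3 + (-4)*X^4) * hxu + ((6) + (14)*X + (18)*X^2 + (16)*X^3 + (8)*X^4) * hss + ((-2)*X^2 + (-2)*X^3) * hsu + ((2)*sB (m+1) + (4)*X*pB (m+1) + (7)*X*sB (m+1) + (2)*X*sB (m+1)*pB (m+1) + X*(X^(2^(m+2)-1)) + (-6)*X^2 + (9)*X^2*pB (m+1) + (2)*X^2*pB (m+1)^2 + (14)*X^2*sB (m+1) + (4)*X^2*sB (m+1)*pB (m+1) + (2)*X^2*(X^(2^(m+2)-1)) + (-14)*X^3 + (10)*X^3*pB (m+1) + (20)*X^3*sB (m+1) + (4)*X^3*sB (m+1)*pB (m+1) + (3)*X^3*(X^(2^(m+2)-1)) + (-24)*X^4 + (8)*X^4*pB (m+1) + (17)*X^4*sB (m+1) + (3)*X^4*(X^(2^(m+2)-1)) + (-29)*X^5 + (4)*X^5*pB (m+1) + (10)*X^5*sB (m+1) + X^5*(X^(2^(m+2)-1))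 + (-24)*X^6 + (4)*X^6*sB (m+1) + (-16)*X^7 + (-6)*X^8) * h4
      · rw [show lamB (m+3) (-1:ℤ) = lamB (m+2) 1 * stB (-1) * lamB (m+2) (-1) from rfl,
            ih.1, ih.2]
        simp only [Ee, Ff, stB, Int.cast_one, Int.cast_neg, map_one, map_neg, neg_mul, one_mul,
          Matrix.mul_fin_two, tB]
        simp only [show m+1+2 = m+3 from rfl, show m+1+1 = m+2 from rfl]
        rw [hu3, hp2, hs3, hs2, hq3, hq]
        refine fin2_mat_eq ?_ ?_ ?_ ?_ <;>
          simp only [Matrix.cons_val_zero, Matrix.cons_val_one, Matrix.head_cons, Matrix.of_apply,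
            Matrix.cons_val']
        · linear_combination (norm := ring1) ((-1) + (-4)*pB (m+1) + (-1)*uB (m+2) + (-1)*(X^(2^(m+2)-1)) + (-6)*X + (-2)*X*pB (m+1) + (-6)*X^2 + (-6)*X^3) * hxu + ((2) + (6)*X + (6)*X^2 + (4)*X^3 + (-4)*X^4) * hss + ((-1) + (-2)*X^2 + (-2)*X^3) * hsu + ((-1)*pB (m+1) + (-1)*(X^(2^(m+2)-1))*sB (m+1) + X*pB (m+1) + (-1)*X*pB (m+1)^2 + (2)*X*sB (m+1) + (2)*X*sB (m+1)*pB (m+1) + X*(X^(2^(m+2)-1)) + (-1)*X^2 + X^2*pB (m+1) + (-1)*X^2*pB (m+1)^2 + (5)*X^2*sB (m+1) + (2)*X^2*(X^(2^(m+2)-1)) + (-3)*X^3 + (6)*X^3*sB (m+1) + (-2)*X^3*sB (m+1)*pB (m+1) + X^3*(X^(2^(m+2)-1)) + (-6)*X^4 + (4)*X^4*sB (m+1) + X^4*(X^(2^(m+2)-1)) + (-5)*X^5 + (-2)*X^5*pB (m+1) + (-1)*X^6 + (-2)*X^6*sB (m+1) + X^7 + (3)*X^8) * h4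
        · linear_combination (norm := ring1) ((-1) + (-4)*X + (-2)*X*pB (m+1) + (-6)*X^2 + (-6)*X^3 + (-4)*X^4) * hxu + ((3) + (10)*X + (10)*X^2 + (4)*X^3 + (-4)*X^4 + (-4)*X^5) * hss + ((-2)*X^2 + (-2)*X^3) * hsu + ((-1)*X + X*pB (m+1) + (4)*X*sB (m+1) + X*(X^(2^(m+2)-1))*sB (m+1) + (-3)*X^2 + (3)*X^2*pB (m+1) + (-1)*X^2*pB (m+1)^2 + (10)*X^2*sB (m+1) + (2)*X^2*(X^(2^(m+2)-1)) + X^2*(X^(2^(m+2)-1))*sB (m+1) + (-7)*X^3 + (2)*X^3*pB (m+1) + (-1)*X^3*pB (m+1)^2 + (10)*X^3*sB (m+1) + (-2)*X^3*sB (m+1)*pB (m+1) + (2)*X^3*(X^(2^(m+2)-1)) + (-10)*X^4 + (5)*X^4*sB (m+1) + (-2)*X^4*sB (m+1)*pB (m+1) + X^4*(X^(2^(m+2)-1)) + (-8)*X^5 + (-4)*X^5*pB (m+1) + (-1)*X^5*sB (m+1) + (-1)*X^5*(X^(2^(m+2)-1)) + (-2)*X^6 + (-2)*X^6*pB (m+1)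 + (-4)*X^6*sB (m+1) + (-1)*X^6*(X^(2^(m+2)-1)) + (3)*X^7 + (-2)*X^7*sB (m+1) + (5)*X^8 + (3)*X^9) * h4
        · linear_combination (norm := ring1) (uB (m+2) + (X^(2^(m+2)-1)) + (2)*X + (4)*X^2 + (4)*X^3) * hxu + ((4) + (8)*X + (12)*X^2 + (4)*X^3 + (4)*X^4) * hss + ((1)) * hsu + (pB (m+1) + (2)*sB (m+1) + (2)*sB (m+1)*pB (m+1) + (-2)*X + X*pB (m+1)^2 + (5)*X*sB (m+1) + (4)*X*sB (m+1)*pB (m+1) + X*(X^(2^(m+2)-1)) + (-7)*X^2 + X^2*pB (m+1)^2 + (10)*X^2*sB (m+1) + (2)*X^2*sB (m+1)*pB (m+1) + (2)*X^2*(X^(2^(m+2)-1)) + (-14)*X^3 + (4)*X^3*pB (m+1) + (10)*X^3*sB (m+1) + (2)*X^3*sB (m+1)*pB (m+1) + (4)*X^3*(X^(2^(m+2)-1)) + (-17)*X^4 + (9)*X^4*sB (m+1) + (2)*X^4*(X^(2^(m+2)-1)) + (-16)*X^5 + (2)*X^5*pB (m+1) + (4)*X^5*sB (m+1) + X^5*(X^(2^(m+2)-1))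 + (-11)*X^6 + (2)*X^6*sB (m+1) + (-5)*X^7 + (-3)*X^8) * h4
        · linear_combination (norm := ring1) ((1) + (4)*X + (2)*X*pB (m+1) + (6)*X^2 + (6)*X^3 + (4)*X^4) * hxu + ((6) + (14)*X + (18)*X^2 + (8)*X^3) * hss + ((2)*X^2 + (2)*X^3) * hsu + ((3)*sB (m+1) + (-2)*X + (3)*X*pB (m+1) + (9)*X*sB (m+1) + (3)*X*sB (m+1)*pB (m+1) + (2)*X*(X^(2^(m+2)-1)) + (-11)*X^2 + (7)*X^2*pB (m+1) + (15)*X^2*sB (m+1) + (2)*X^2*sB (m+1)*pB (m+1) + (4)*X^2*(X^(2^(m+2)-1)) + X^2*(X^(2^(m+2)-1))*pB (m+1) + X^2*(X^(2^(m+2)-1))*sB (m+1) + (-21)*X^3 + (8)*X^3*pB (m+1) + (17)*X^3*sB (m+1) + (5)*X^3*(X^(2^(m+2)-1)) + X^3*(X^(2^(m+2)-1))*sB (m+1) + (-28)*X^4 + (4)*X^4*pB (m+1) + (12)*X^4*sB (m+1) + (2)*X^4*(X^(2^(m+2)-1)) + (-27)*X^5 + (4)*X^5*sB (m+1) + (-16)*X^6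 + (-4)*X^7) * h4

noncomputable def phiZ : Polynomial ℤ →+* Polynomial (ZMod 4) :=
  Polynomial.mapRingHom (Int.castRingHom (ZMod 4))

lemma phiZ_stZ (c : ℤ) : (stZ c).map phiZ = stB c := by
  refine fin2_mat_eq ?_ ?_ ?_ ?_ <;>
    simp [stZ, stB, phiZ, Matrix.map_apply, Matrix.cons_val_zero, Matrix.cons_val_one,
      Matrix.head_cons, Matrix.of_apply, Matrix.cons_val']

lemma map_mul_mat (A C : Matrix (Fin 2) (Fin 2) (Polynomial ℤ)) :
    (A * C).map phiZ = A.map phiZ * C.map phiZ := by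
  have := map_mul (RingHom.mapMatrix (m := Fin 2) phiZ) A C
  simpa [RingHom.mapMatrix_apply] using this

lemma phiZ_lamZ : ∀ r : ℕ, ∀ d : ℤ, (lamZ r d).map phiZ = lamB r d := by
  intro r
  induction r with
  | zero => intro d; exact phiZ_stZ d
  | succ r ih =>
      intro d
      show (lamZ r 1 * stZ d * lamZ r (-1)).map phiZ = lamB r 1 * stB d * lamB r (-1)
      rw [map_mul_mat, map_mul_mat, ih, ih, phiZ_stZ]

lemma phiZ_Spoly : ∀ m : ℕ, phiZ (Spoly m) = sB m := by
  intro m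
  induction m with
  | zero => simp [Spoly, phiZ, sB]
  | succ m ih =>
      have : Spoly (m+1) = Spoly m + X^(2^(m+1)) := Finset.sum_range_succ _ _
      rw [this, map_add, ih, map_pow, show phiZ X = X from Polynomial.map_X _,
        show sB (m+1) = sB m + X^(2^(m+1)) from rfl]

lemma SpolyIcc : ∀ m : ℕ, 1 ≤ m →
    Spoly m = X + X^2 + ∑ k ∈ Finset.Icc 2 m, (X : Polynomial ℤ)^(2^k) := by
  intro m hm
  induction m, hm using Nat.le_induction with
  | base =>
      rw [show Finset.Icc 2 1 = ∅ from Finset.Icc_eq_empty (by omega)]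
      simp [Spoly, Finset.sum_range_succ]
  | succ m hm ih =>
      have h1 : Spoly (m+1) = Spoly m + X^(2^(m+1)) := Finset.sum_range_succ _ _
      rw [h1, ih, Finset.sum_Icc_succ_top (show 2 ≤ m+1 by omega)]
      ring

lemma TpolyRec (m : ℕ) (hm : 2 ≤ m) :
    Tpoly (m+1) = Tpoly m + X^(2^(m+1)) * (Spoly m - X - X^2) := by
  show (∑ i ∈ Finset.Icc 3 (m+1), ∑ k ∈ Finset.Icc 2 (i-1), (X:Polynomial ℤ)^(2^i+2^k)) = _
  rw [Finset.sum_Icc_succ_top (show 3 ≤ m+1 by omega)]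
  congr 1
  rw [SpolyIcc m (by omega)]
  have : (X:Polynomial ℤ) + X^2 + (∑ k ∈ Finset.Icc 2 m, (X:Polynomial ℤ)^(2^k)) - X - X^2
      = ∑ k ∈ Finset.Icc 2 m, (X:Polynomial ℤ)^(2^k) := by ring
  rw [this, Finset.mul_sum]
  refine Finset.sum_congr (by norm_num) fun k hk => ?_
  rw [← pow_add]

lemma phiZ_Tpoly : ∀ m : ℕ, 1 ≤ m → phiZ (Tpoly m) = tB m := by
  intro m hm
  induction m, hm using Nat.le_induction with
  | base =>
      rw [show Tpoly 1 = 0 by simp [Tpoly]]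
      rw [show tB 1 = X * pB 1 from rfl, show pB 1 = 0 from rfl]
      simp
  | succ m hm ih =>
      rcases Nat.lt_or_ge m 2 with h2 | h2
      · have hm1 : m = 1 := by omega
        subst hm1
        rw [show Tpoly 2 = 0 by
          show (∑ i ∈ Finset.Icc 3 2, ∑ k ∈ Finset.Icc 2 (i-1), (X:Polynomial ℤ)^(2^i+2^k)) = 0
          rw [Finset.Icc_eq_empty (by omega)]; simp]
        rw [map_zero, show tB 2 = X * pB 2 from rfl,
          show pB 2 = pB 1 + X^(2^2-1) * (sB 1 - X - X^2) from rfl,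
          show pB 1 = 0 from rfl, show sB 1 = sB 0 + X^(2^1) from rfl,
          show sB 0 = X from rfl]
        norm_num
      · rw [TpolyRec m h2, map_add, ih, map_mul, map_pow,
          show phiZ X = X from Polynomial.map_X _, map_sub, map_sub, map_pow,
          show phiZ X = X from Polynomial.map_X _, phiZ_Spoly,
          tB_succ m (by omega)]


/-- (Lemma 4.2 (5)–(8).) Mod-4 description of the polynomials `P^b, Q^b` built from the
blocks `p_{2^n} ⋯ p_{2^{n+1}-1}` of the paperfolding sequence. -/
theorem stmt10 (p : ℕ → ℤ) (hp0 : p 0 = 1)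
    (hp4 : ∀ n, p (4 * n) = 1) (hp42 : ∀ n, p (4 * n + 2) = -1)
    (hpodd : ∀ n, p (2 * n + 1) = p n)
    (Pb Qb : ℕ → Polynomial ℤ)
    (hPQb : ∀ n : ℕ, 2 ≤ n →
      !![Pb (2 ^ n - 2), Pb (2 ^ n - 1); Qb (2 ^ n - 2), Qb (2 ^ n - 1)] =
        ((List.range (2 ^ n)).map (fun i => step p (2 ^ n + i))).prod) :
    ∀ n : ℕ, 4 ≤ n →
      (∀ i : ℕ, (Qb (2 ^ n - 2)).coeff i ≡
        (1 + 2 * (X + X ^ 2 + X ^ 3 + X ^ 4) + 2 * (X + X ^ 2) * Spoly (n - 2) +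
          2 * Tpoly (n - 2) : Polynomial ℤ).coeff i [ZMOD 4]) ∧
      (∀ i : ℕ, (Qb (2 ^ n - 1)).coeff i ≡
        ((1 + 2 * X) + 2 * X * Spoly (n - 2) + Spoly (n - 1) :
          Polynomial ℤ).coeff i [ZMOD 4]) ∧
      (∀ i : ℕ, (Pb (2 ^ n - 2)).coeff i ≡
        (2 * X + 2 * (1 + X) * Spoly (n - 2) + Spoly (n - 1) :
          Polynomial ℤ).coeff i [ZMOD 4]) ∧
      (∀ i : ℕ, (Pb (2 ^ n - 1)).coeff i ≡
        ((3 * X + 2 * X ^ 5) + 2 * (1 + X ^ 3) * Spoly (n - 2) +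
          2 * (1 + X) * Tpoly (n - 2) : Polynomial ℤ).coeff i [ZMOD 4]) := by
  intro n hn
  obtain ⟨m, rfl⟩ : ∃ m, n = m + 4 := ⟨n - 4, by omega⟩
  simp only [show m+4-2 = m+2 from rfl, show m+4-1 = m+3 from rfl]
  have hmat := hPQb (m+4) (by omega)
  rw [show (fun i => step p (2^(m+4) + i)) = (fun i => stZ (p (2^(m+4) + i))) from rfl,
    block_eq p hp0 hp4 hp42 hpodd (m+4) (by omega)] at hmat
  have key : (lamZ (m+4-1) (-1) * stZ 1).map phiZ = Ff (m+1) * stB 1 := by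
    rw [map_mul_mat, phiZ_lamZ, phiZ_stZ]
    rw [show lamB (m+4-1) (-1) = Ff (m+1) from (lamB_closed (m+1)).2]
  have hxu3 : (X:B) * uB (m+3) = sB (m+3) - X - X^2 := rel_xu (m+3) (by omega)
  have hent : ∀ i j : Fin 2, phiZ (!![Pb (2^(m+4) - 2), Pb (2^(m+4) - 1);
      Qb (2^(m+4) - 2), Qb (2^(m+4) - 1)] i j) = (Ff (m+1) * stB 1) i j := by
    intro i j
    rw [hmat, ← key, Matrix.map_apply]
  have hQ2 := hent 1 0
  have hQ1 := hent 1 1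
  have hP2 := hent 0 0
  have hP1 := hent 0 1
  simp only [Matrix.cons_val_zero, Matrix.cons_val_one, Matrix.head_cons, Matrix.of_apply,
    Matrix.cons_val'] at hQ2 hQ1 hP2 hP1
  have coeffcong : ∀ (q : Polynomial ℤ) (r : Polynomial ℤ), phiZ q = phiZ r →
      ∀ i : ℕ, q.coeff i ≡ r.coeff i [ZMOD 4] := by
    intro q r hqr i
    have hc := congrArg (fun t : Polynomial (ZMod 4) => t.coeff i) hqr
    simp only [phiZ, Polynomial.coe_mapRingHom, Polynomial.coeff_map, eq_intCast] at hc
    exact (ZMod.intCast_eq_intCast_iff _ _ _).mp hc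
  refine ⟨coeffcong _ _ ?_, coeffcong _ _ ?_, coeffcong _ _ ?_, coeffcong _ _ ?_⟩
  · -- Qb (2^n - 2)
    rw [hQ2]
    simp only [map_add, map_mul, map_pow, map_one, map_ofNat,
      show phiZ X = X from Polynomial.map_X _, phiZ_Spoly]
    rw [phiZ_Tpoly (m+2) (by omega)]
    simp only [Ff, stB, Int.cast_one, map_one, one_mul, Matrix.mul_fin_two,
      Matrix.cons_val_zero, Matrix.cons_val_one, Matrix.head_cons, Matrix.of_apply,
      Matrix.cons_val', show m+1+1 = m+2 from rfl, show m+1+2 = m+3 from rfl]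
    ring
  · -- Qb (2^n - 1)
    rw [hQ1]
    simp only [map_add, map_mul, map_pow, map_one, map_ofNat,
      show phiZ X = X from Polynomial.map_X _, phiZ_Spoly]
    simp only [Ff, stB, Int.cast_one, map_one, one_mul, Matrix.mul_fin_two,
      Matrix.cons_val_zero, Matrix.cons_val_one, Matrix.head_cons, Matrix.of_apply,
      Matrix.cons_val', tB, show m+1+1 = m+2 from rfl, show m+1+2 = m+3 from rfl]
    linear_combination (norm := ring1) hxu3 + (X*pB (m+2) + (X)^2 + (X)^2*sB (m+2) + (X)^3 + (X)^4) * h4B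
  · -- Pb (2^n - 2)
    rw [hP2]
    simp only [map_add, map_mul, map_pow, map_one, map_ofNat,
      show phiZ X = X from Polynomial.map_X _, phiZ_Spoly]
    simp only [Ff, stB, Int.cast_one, map_one, one_mul, Matrix.mul_fin_two,
      Matrix.cons_val_zero, Matrix.cons_val_one, Matrix.head_cons, Matrix.of_apply,
      Matrix.cons_val', show m+1+1 = m+2 from rfl, show m+1+2 = m+3 from rfl]
    ring
  · -- Pb (2^n - 1)
    rw [hP1]
    simp only [map_add, map_mul, map_pow, map_one, map_ofNat,
      show phiZ X = X from Polynomial.map_X _, phiZ_Spoly]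
    rw [phiZ_Tpoly (m+2) (by omega)]
    simp only [Ff, stB, Int.cast_one, map_one, one_mul, Matrix.mul_fin_two,
      Matrix.cons_val_zero, Matrix.cons_val_one, Matrix.head_cons, Matrix.of_apply,
      Matrix.cons_val', tB, show m+1+1 = m+2 from rfl, show m+1+2 = m+3 from rfl]
    linear_combination (norm := ring1) (-1) * hxu3 + (X*sB (m+2)) * h4B
end
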